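/- arXiv:1508.00827 — 3 statements merged into one kernel-verified Lean document; each statement's English description precedes it below -/
import Mathlib

section
/- Let s < −1/2 and let θ > 0 satisfy s < −1/2 − 3θ. There exist c > 0 and N₀ such that for every integer N ≥ N₀ the following holds. Set R = N^{−1/2−s} and A = N^{1−θ}, let φ_N(x) = R Σ_{n∈S} e^{2πinx} where S = {n ∈ ℤ : |n − N| ≤ A/2 or |n − 2N| ≤ A/2}, let w(x,t) = φ_N(x) e^{i|φ_N(x)|² t}, and set T_N = N^{2s−1−θ}. Then (Σ_{n∈ℤ, |n|<N} (1+n²)^s |ŵ(n, T_N)|²)^{1/2} ≥ c N^{−1/2 − s − 3θ}, where ŵ(n,t) = ∫₀¹ w(x,t) e^{−2πinx} dx. -/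
open scoped Real

/-- Fourier coefficient of a 1-periodic function `f : ℝ → ℂ`:
`f̂(n) = ∫₀¹ f(x) e^{−2πinx} dx`. -/
noncomputable def fourierCoeff1 (f : ℝ → ℂ) (n : ℤ) : ℂ :=
  ∫ x in (0:ℝ)..1, f x * Complex.exp (-2 * (π : ℂ) * Complex.I * (n : ℂ) * (x : ℂ))

/-- `φ(x) = R Σ_{n∈S} e^{2πinx}` where
`S = {n ∈ ℤ : |n − N| ≤ A/2 or |n − 2N| ≤ A/2}`. -/
noncomputable def phiPacket (R A N : ℝ) (x : ℝ) : ℂ :=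
  (R : ℂ) * ∑' n : ℤ,
    if |(n:ℝ) - N| ≤ A/2 ∨ |(n:ℝ) - 2*N| ≤ A/2
      then Complex.exp (2 * (π : ℂ) * Complex.I * (n : ℂ) * (x : ℂ)) else 0

/-- Solution `w(x,t) = φ(x) e^{i|φ(x)|² t}` of the dispersionless ODE
`i∂_t w + |w|²w = 0`. -/
noncomputable def odeSol (φ : ℝ → ℂ) (x t : ℝ) : ℂ :=
  φ x * Complex.exp (Complex.I * ((‖φ x‖^2 : ℝ) : ℂ) * (t : ℂ))

open Complex

lemma int_exp (m : ℤ) :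
    ∫ x in (0:ℝ)..1, Complex.exp (2 * (π:ℂ) * Complex.I * (m:ℂ) * (x:ℂ))
      = if m = 0 then 1 else 0 := by
  rcases eq_or_ne m 0 with h | h
  · simp [h]
  · have hc : (2 * (π:ℂ) * Complex.I * (m:ℂ)) ≠ 0 := by
      simp [Real.pi_ne_zero, Complex.I_ne_zero, h]
    rw [show (fun x : ℝ => Complex.exp (2 * (π:ℂ) * Complex.I * (m:ℂ) * (x:ℂ)))
        = fun x : ℝ => Complex.exp ((2 * (π:ℂ) * Complex.I * (m:ℂ)) * (x:ℂ)) from rfl]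
    rw [integral_exp_mul_complex hc]
    have h1 : (2 * (π:ℂ) * Complex.I * (m:ℂ)) * ((1:ℝ):ℂ) = (m:ℂ) * (2 * π * Complex.I) := by
      push_cast; ring
    have h0 : (2 * (π:ℂ) * Complex.I * (m:ℂ)) * ((0:ℝ):ℂ) = 0 := by push_cast; ring
    rw [h1, h0, Complex.exp_int_mul_two_pi_mul_I, Complex.exp_zero]
    simp [h]

lemma triple_mul_sum {M : Type*} [CommRing M] (f g h : ℤ → M) (B : Finset ℤ) :
    (∑ a ∈ B, f a) * (∑ b ∈ B, g b) * (∑ c ∈ B, h c)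
      = ∑ a ∈ B, ∑ b ∈ B, ∑ c ∈ B, f a * g b * h c := by
  rw [Finset.sum_mul_sum, Finset.sum_mul]
  refine Finset.sum_congr rfl fun a _ => ?_
  rw [Finset.sum_mul]
  refine Finset.sum_congr rfl fun b _ => ?_
  rw [Finset.mul_sum]

section gsec
variable (P : ℤ → Prop) [DecidablePred P]

noncomputable def gfun (n : ℤ) (x : ℝ) : ℂ :=
  if P n then Complex.exp (2 * (π:ℂ) * Complex.I * (n:ℂ) * (x:ℂ)) else 0

lemma gfun_cont (n : ℤ) : Continuous (gfun P n) := by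
  unfold gfun
  split
  · exact Complex.continuous_exp.comp (by continuity)
  · exact continuous_const

lemma gfun_norm_le (n : ℤ) (x : ℝ) : ‖gfun P n x‖ ≤ (if P n then (1:ℝ) else 0) := by
  unfold gfun
  split
  · have : 2 * (π:ℂ) * Complex.I * (n:ℂ) * (x:ℂ) = ((2*π*n*x : ℝ):ℂ) * Complex.I := by
      push_cast; ring
    rw [this]
    rw [Complex.norm_exp_ofReal_mul_I]
  · simp

lemma int_gfun (a : ℤ) :
    ∫ x in (0:ℝ)..1, gfun P a x = if P a ∧ a = 0 then 1 else 0 := by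
  by_cases ha : P a
  · simp only [gfun, ha, if_true, int_exp, true_and]
  · simp [gfun, ha]

lemma int_gfun_mul_conj (a c : ℤ) :
    ∫ x in (0:ℝ)..1, gfun P a x * (starRingEnd ℂ) (gfun P c x)
      = if P a ∧ P c ∧ a = c then 1 else 0 := by
  by_cases ha : P a
  · by_cases hc : P c
    · have : ∀ x : ℝ, gfun P a x * (starRingEnd ℂ) (gfun P c x)
          = Complex.exp (2 * (π:ℂ) * Complex.I * ((a - c : ℤ):ℂ) * (x:ℂ)) := by
        intro x
        simp only [gfun, if_pos ha, if_pos hc, ← Complex.exp_conj, ← Complex.exp_add]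
        congr 1
        have : (starRingEnd ℂ) (2 * (π:ℂ) * Complex.I * (c:ℂ) * (x:ℂ))
            = -(2 * (π:ℂ) * Complex.I * (c:ℂ) * (x:ℂ)) := by
          simp only [map_mul, Complex.conj_I, Complex.conj_ofReal, map_ofNat, map_intCast]
          ring
        rw [this]
        push_cast
        ring
      rw [intervalIntegral.integral_congr (fun x _ => this x), int_exp]
      simp only [ha, hc, true_and, sub_eq_zero]
    · simp [gfun, hc, ha]
  · simp [gfun, ha]

lemma int_gfun_triple (a b c : ℤ) :
    ∫ x in (0:ℝ)..1, gfun P a x * gfun P b x * (starRingEnd ℂ) (gfun P c x)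
      = if P a ∧ P b ∧ P c ∧ a + b = c then 1 else 0 := by
  by_cases ha : P a
  · by_cases hb : P b
    · by_cases hc : P c
      · have : ∀ x : ℝ, gfun P a x * gfun P b x * (starRingEnd ℂ) (gfun P c x)
            = Complex.exp (2 * (π:ℂ) * Complex.I * ((a + b - c : ℤ):ℂ) * (x:ℂ)) := by
          intro x
          simp only [gfun, if_pos ha, if_pos hb, if_pos hc, ← Complex.exp_conj,
            ← Complex.exp_add]
          congr 1
          have : (starRingEnd ℂ) (2 * (π:ℂ) * Complex.I * (c:ℂ) * (x:ℂ))
              = -(2 * (π:ℂ) * Complex.I * (c:ℂ) * (x:ℂ)) := by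
            simp only [map_mul, Complex.conj_I, Complex.conj_ofReal, map_ofNat, map_intCast]
            ring
          rw [this]
          push_cast
          ring
        rw [intervalIntegral.integral_congr (fun x _ => this x), int_exp]
        simp only [ha, hb, hc, true_and, sub_eq_zero]
      · simp [gfun, hc, ha, hb]
    · simp [gfun, hb, ha]
  · simp [gfun, ha]


lemma gfun_conj_cont (n : ℤ) :
    Continuous (fun x => (starRingEnd ℂ) (gfun P n x)) :=
  (gfun_cont P n).star

variable (B : Finset ℤ) (R : ℝ)

noncomputable def phiB (x : ℝ) : ℂ := (R:ℂ) * ∑ n ∈ B, gfun P n x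

lemma phiB_cont : Continuous (phiB P B R) :=
  continuous_const.mul (continuous_finset_sum _ fun n _ => gfun_cont P n)

lemma phiB_norm_le (hR : 0 ≤ R) (x : ℝ) :
    ‖phiB P B R x‖ ≤ R * ∑ n ∈ B, (if P n then (1:ℝ) else 0) := by
  unfold phiB
  rw [norm_mul, Complex.norm_real, Real.norm_eq_abs, _root_.abs_of_nonneg hR]
  gcongr
  exact (norm_sum_le _ _).trans (Finset.sum_le_sum fun n _ => gfun_norm_le P n x)

lemma int_phiB :
    ∫ x in (0:ℝ)..1, phiB P B R x
      = (R:ℂ) * ∑ a ∈ B, (if P a ∧ a = 0 then 1 else 0) := by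
  unfold phiB
  rw [intervalIntegral.integral_const_mul,
    intervalIntegral.integral_finset_sum
      (fun a _ => ((gfun_cont P a).intervalIntegrable _ _))]
  congr 1
  exact Finset.sum_congr rfl fun a _ => int_gfun P a

lemma phiB_cube (x : ℝ) :
    phiB P B R x * phiB P B R x * (starRingEnd ℂ) (phiB P B R x)
      = (R:ℂ)^3 * ∑ a ∈ B, ∑ b ∈ B, ∑ c ∈ B,
          gfun P a x * gfun P b x * (starRingEnd ℂ) (gfun P c x) := by
  unfold phiB
  rw [map_mul, map_sum, Complex.conj_ofReal,
    ← triple_mul_sum (fun a => gfun P a x) (fun b => gfun P b x)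
      (fun c => (starRingEnd ℂ) (gfun P c x)) B]
  ring

lemma int_phiB_cube :
    ∫ x in (0:ℝ)..1,
        phiB P B R x * phiB P B R x * (starRingEnd ℂ) (phiB P B R x)
      = (R:ℂ)^3 * ∑ a ∈ B, ∑ b ∈ B, ∑ c ∈ B,
          (if P a ∧ P b ∧ P c ∧ a + b = c then 1 else 0) := by
  rw [intervalIntegral.integral_congr (fun x _ => phiB_cube P B R x),
    intervalIntegral.integral_const_mul]
  congr 1
  rw [intervalIntegral.integral_finset_sum]
  swap
  · exact fun a _ => (continuous_finset_sum _ fun b _ => continuous_finset_sum _ fun c _ =>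
      ((gfun_cont P a).mul (gfun_cont P b)).mul (gfun_conj_cont P c)).intervalIntegrable _ _
  refine Finset.sum_congr rfl fun a _ => ?_
  rw [intervalIntegral.integral_finset_sum]
  swap
  · exact fun b _ => (continuous_finset_sum _ fun c _ =>
      ((gfun_cont P a).mul (gfun_cont P b)).mul (gfun_conj_cont P c)).intervalIntegrable _ _
  refine Finset.sum_congr rfl fun b _ => ?_
  rw [intervalIntegral.integral_finset_sum]
  swap
  · exact fun c _ =>
      (((gfun_cont P a).mul (gfun_cont P b)).mul (gfun_conj_cont P c)).intervalIntegrable _ _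
  exact Finset.sum_congr rfl fun c _ => int_gfun_triple P a b c

lemma phiB_sq (x : ℝ) :
    phiB P B R x * (starRingEnd ℂ) (phiB P B R x)
      = (R:ℂ)^2 * ∑ a ∈ B, ∑ c ∈ B,
          gfun P a x * (starRingEnd ℂ) (gfun P c x) := by
  unfold phiB
  rw [map_mul, map_sum, Complex.conj_ofReal, ← Finset.sum_mul_sum]
  ring

lemma int_phiB_sq :
    ∫ x in (0:ℝ)..1, phiB P B R x * (starRingEnd ℂ) (phiB P B R x)
      = (R:ℂ)^2 * ∑ a ∈ B, (if P a then 1 else 0) := by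
  rw [intervalIntegral.integral_congr (fun x _ => phiB_sq P B R x),
    intervalIntegral.integral_const_mul]
  congr 1
  rw [intervalIntegral.integral_finset_sum]
  swap
  · exact fun a _ => (continuous_finset_sum _ fun c _ =>
      (gfun_cont P a).mul (gfun_conj_cont P c)).intervalIntegrable _ _
  refine Finset.sum_congr rfl fun a ha => ?_
  rw [intervalIntegral.integral_finset_sum]
  swap
  · exact fun c _ =>
      ((gfun_cont P a).mul (gfun_conj_cont P c)).intervalIntegrable _ _
  rw [Finset.sum_congr rfl (fun c _ => int_gfun_mul_conj P a c)]
  have key : ∀ c ∈ B, (if P a ∧ P c ∧ a = c then (1:ℂ) else 0)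
      = if c = a then (if P a then (1:ℂ) else 0) else 0 := by
    intro c _
    by_cases h : c = a
    · subst h; simp
    · simp only [if_neg h, ite_eq_right_iff]
      exact fun hx => absurd hx.2.2 (fun h' => h h'.symm)
  rw [Finset.sum_congr rfl key, Finset.sum_ite_eq' B a (fun _ => if P a then (1:ℂ) else 0),
    if_pos ha]
end gsec

lemma normsq_cast (z : ℂ) : ((‖z‖^2 : ℝ) : ℂ) = z * (starRingEnd ℂ) z := by
  rw [Complex.mul_conj]
  norm_cast
  simp [Complex.normSq_eq_norm_sq]

lemma core_lower (P : ℤ → Prop) [inst : DecidablePred P] (B : Finset ℤ) (R T S q : ℝ)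
    (hR : 0 ≤ R) (hT : 0 ≤ T) (hP0 : ¬ P 0)
    (hS : S = ∑ n ∈ B, (if P n then (1:ℝ) else 0))
    (hq : q = ∑ a ∈ B, ∑ b ∈ B, ∑ c ∈ B,
        (if P a ∧ P b ∧ P c ∧ a + b = c then (1:ℝ) else 0))
    (hsmall : T * (R*S)^2 ≤ 1) (hrem : T * R^2 * S^4 ≤ q / 2) :
    T * R^3 * q / 2 ≤
      ‖∫ x in (0:ℝ)..1,
        phiB P B R x * Complex.exp (Complex.I * ((‖phiB P B R x‖^2 : ℝ) : ℂ) * (T : ℂ))‖ := by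
  set φ := phiB P B R with hφdef
  have hφc : Continuous φ := phiB_cont P B R
  set μ : ℝ → ℝ := fun x => ‖φ x‖^2 with hμdef
  have hμc : Continuous μ := (hφc.norm).pow 2
  have hμ0 : ∀ x, 0 ≤ μ x := fun x => sq_nonneg _
  set z : ℝ → ℂ := fun x => Complex.I * ((μ x : ℝ) : ℂ) * (T : ℂ) with hzdef
  have hzc : Continuous z :=
    (continuous_const.mul (Complex.continuous_ofReal.comp hμc)).mul continuous_const
  set ρ : ℝ → ℂ := fun x => Complex.exp (z x) - 1 - z x with hρdef
  have hρc : Continuous ρ := ((Complex.continuous_exp.comp hzc).sub continuous_const).sub hzc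
  -- bound on S and nonnegativity
  have hS0 : 0 ≤ S := by
    rw [hS]; exact Finset.sum_nonneg fun n _ => by positivity
  have hq0 : 0 ≤ q := by
    rw [hq]
    exact Finset.sum_nonneg fun a _ => Finset.sum_nonneg fun b _ =>
      Finset.sum_nonneg fun c _ => by positivity
  have hφle : ∀ x, ‖φ x‖ ≤ R * S := by
    intro x; rw [hS]; exact phiB_norm_le P B R hR x
  -- |z x| ≤ 1
  have hznorm : ∀ x, ‖z x‖ = μ x * T := by
    intro x
    rw [hzdef]
    simp only [norm_mul, Complex.norm_I, one_mul, Complex.norm_real, Real.norm_eq_abs,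
      _root_.abs_of_nonneg (hμ0 x), _root_.abs_of_nonneg hT]
  have hz1 : ∀ x, ‖z x‖ ≤ 1 := by
    intro x
    rw [hznorm]
    calc μ x * T ≤ (R*S)^2 * T := by
          refine mul_le_mul_of_nonneg_right ?_ hT
          calc μ x = ‖φ x‖^2 := rfl
            _ ≤ (R*S)^2 := by
              have := hφle x
              nlinarith [norm_nonneg (φ x)]
      _ = T * (R*S)^2 := by ring
      _ ≤ 1 := hsmall
  -- pointwise remainder bound
  have hρ_le : ∀ x, ‖ρ x‖ ≤ (μ x * T)^2 := by
    intro x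
    have := Complex.norm_exp_sub_one_sub_id_le (x := z x) (hz1 x)
    rw [hρdef]
    calc ‖Complex.exp (z x) - 1 - z x‖
        ≤ ‖z x‖^2 := this
      _ = (μ x * T)^2 := by rw [hznorm]
  -- decomposition of the integral
  have hint1 : IntervalIntegrable (fun x => φ x * z x) MeasureTheory.volume 0 1 :=
    (hφc.mul hzc).intervalIntegrable _ _
  have hint2 : IntervalIntegrable (fun x => φ x * ρ x) MeasureTheory.volume 0 1 :=
    (hφc.mul hρc).intervalIntegrable _ _
  have hint0 : IntervalIntegrable φ MeasureTheory.volume 0 1 :=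
    hφc.intervalIntegrable _ _
  have hsplit : (∫ x in (0:ℝ)..1, φ x * Complex.exp (z x))
      = (∫ x in (0:ℝ)..1, φ x) + (∫ x in (0:ℝ)..1, φ x * z x)
        + (∫ x in (0:ℝ)..1, φ x * ρ x) := by
    rw [← intervalIntegral.integral_add hint0 hint1,
      ← intervalIntegral.integral_add (hint0.add hint1) hint2]
    refine intervalIntegral.integral_congr fun x _ => ?_
    simp only [hρdef]
    ring
  -- the linear (φ) term vanishes
  have hzero : (∫ x in (0:ℝ)..1, φ x) = 0 := by
    rw [hφdef, int_phiB]
    have : ∀ a ∈ B, (if P a ∧ a = 0 then (1:ℂ) else 0) = 0 := by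
      intro a _
      rw [if_neg]
      rintro ⟨hPa, rfl⟩
      exact hP0 hPa
    rw [Finset.sum_congr rfl this]
    simp
  -- the cubic term
  have hcubic : (∫ x in (0:ℝ)..1, φ x * z x)
      = Complex.I * ((T * R^3 * q : ℝ) : ℂ) := by
    have hptwise : ∀ x, φ x * z x
        = (Complex.I * (T:ℂ)) * (φ x * φ x * (starRingEnd ℂ) (φ x)) := by
      intro x
      have : ((μ x : ℝ):ℂ) = φ x * (starRingEnd ℂ) (φ x) := normsq_cast (φ x)
      rw [hzdef]
      simp only []
      rw [this]
      ring
    rw [intervalIntegral.integral_congr (fun x _ => hptwise x),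
      intervalIntegral.integral_const_mul, hφdef, int_phiB_cube]
    have hcast : ((q:ℝ):ℂ) = ∑ a ∈ B, ∑ b ∈ B, ∑ c ∈ B,
        (if P a ∧ P b ∧ P c ∧ a + b = c then (1:ℂ) else 0) := by
      rw [hq]
      push_cast
      refine Finset.sum_congr rfl fun a _ => Finset.sum_congr rfl fun b _ =>
        Finset.sum_congr rfl fun c _ => ?_
      split <;> simp
    rw [← hcast]
    push_cast
    ring
  -- the quadratic L² identity
  have hL2 : (∫ x in (0:ℝ)..1, μ x) = R^2 * S := by
    have h1 : ((∫ x in (0:ℝ)..1, μ x : ℝ) : ℂ) = ∫ x in (0:ℝ)..1, ((μ x : ℝ) : ℂ) := by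
      rw [intervalIntegral.integral_ofReal]
    have h2 : (∫ x in (0:ℝ)..1, ((μ x : ℝ) : ℂ))
        = ∫ x in (0:ℝ)..1, φ x * (starRingEnd ℂ) (φ x) :=
      intervalIntegral.integral_congr fun x _ => normsq_cast (φ x)
    have h3 := int_phiB_sq P B R
    have hcastS : ((S:ℝ):ℂ) = ∑ a ∈ B, (if P a then (1:ℂ) else 0) := by
      rw [hS]; push_cast
      refine Finset.sum_congr rfl fun a _ => ?_
      split <;> simp
    have : ((∫ x in (0:ℝ)..1, μ x : ℝ) : ℂ) = ((R^2 * S : ℝ) : ℂ) := by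
      rw [h1, h2, h3, ← hcastS]
      push_cast
      ring
    exact_mod_cast this
  -- remainder bound
  have hremint : ‖∫ x in (0:ℝ)..1, φ x * ρ x‖ ≤ T^2 * (R*S)^3 * (R^2 * S) := by
    have hb : ∀ x ∈ Set.Icc (0:ℝ) 1, ‖φ x * ρ x‖ ≤ (T^2 * (R*S)^3) * μ x := by
      intro x _
      rw [norm_mul]
      calc ‖φ x‖ * ‖ρ x‖ ≤ ‖φ x‖ * (μ x * T)^2 := by
            exact mul_le_mul_of_nonneg_left (hρ_le x) (norm_nonneg _)
        _ = T^2 * (‖φ x‖ * μ x) * μ x := by rw [hμdef]; ring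
        _ ≤ T^2 * ((R*S) * (R*S)^2) * μ x := by
            refine mul_le_mul_of_nonneg_right ?_ (hμ0 x)
            refine mul_le_mul_of_nonneg_left ?_ (sq_nonneg T)
            refine mul_le_mul (hφle x) ?_ (hμ0 x) ?_
            · calc μ x = ‖φ x‖^2 := rfl
                _ ≤ (R*S)^2 := by nlinarith [norm_nonneg (φ x), hφle x]
            · positivity
        _ = (T^2 * (R*S)^3) * μ x := by ring
    calc ‖∫ x in (0:ℝ)..1, φ x * ρ x‖
        ≤ ∫ x in (0:ℝ)..1, ‖φ x * ρ x‖ :=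
          intervalIntegral.norm_integral_le_integral_norm zero_le_one
      _ ≤ ∫ x in (0:ℝ)..1, (T^2 * (R*S)^3) * μ x := by
          refine intervalIntegral.integral_mono_on zero_le_one ?_ ?_ hb
          · exact ((hφc.mul hρc).norm).intervalIntegrable _ _
          · exact (continuous_const.mul hμc).intervalIntegrable _ _
      _ = (T^2 * (R*S)^3) * (R^2 * S) := by
          rw [intervalIntegral.integral_const_mul, hL2]
      _ = T^2 * (R*S)^3 * (R^2 * S) := by ring
  -- put everything together
  have hmainnorm : ‖∫ x in (0:ℝ)..1, φ x * z x‖ = T * R^3 * q := by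
    rw [hcubic, norm_mul, Complex.norm_I, one_mul, Complex.norm_real, Real.norm_eq_abs,
      _root_.abs_of_nonneg (by positivity : (0:ℝ) ≤ T * R^3 * q)]
  have hfinal : T * R^3 * q - T^2 * (R*S)^3 * (R^2*S)
      ≤ ‖∫ x in (0:ℝ)..1, φ x * Complex.exp (z x)‖ := by
    rw [hsplit, hzero, zero_add]
    have h1 : ‖∫ x in (0:ℝ)..1, φ x * z x‖
        ≤ ‖(∫ x in (0:ℝ)..1, φ x * z x) + (∫ x in (0:ℝ)..1, φ x * ρ x)‖
          + ‖∫ x in (0:ℝ)..1, φ x * ρ x‖ := by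
      have := norm_add_le ((∫ x in (0:ℝ)..1, φ x * z x) + (∫ x in (0:ℝ)..1, φ x * ρ x))
        (-(∫ x in (0:ℝ)..1, φ x * ρ x))
      simpa using this
    have := hremint
    rw [hmainnorm] at h1
    linarith
  have harith : T * R^3 * q / 2 ≤ T * R^3 * q - T^2 * (R*S)^3 * (R^2*S) := by
    have : T^2 * (R*S)^3 * (R^2*S) = (T * R^3) * (T * R^2 * S^4) := by ring
    rw [this]
    have h2 : (T * R^3) * (T * R^2 * S^4) ≤ (T * R^3) * (q/2) :=
      mul_le_mul_of_nonneg_left hrem (by positivity)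
    nlinarith [h2]
  calc T * R^3 * q / 2 ≤ T * R^3 * q - T^2 * (R*S)^3 * (R^2*S) := harith
    _ ≤ ‖∫ x in (0:ℝ)..1, φ x * Complex.exp (z x)‖ := hfinal
    _ = ‖∫ x in (0:ℝ)..1,
        φ x * Complex.exp (Complex.I * ((‖φ x‖^2 : ℝ) : ℂ) * (T : ℂ))‖ := rfl

section pack
variable (A : ℝ) (N : ℕ)

def Pprop (n : ℤ) : Prop :=
  |(n:ℝ) - (N:ℝ)| ≤ A/2 ∨ |(n:ℝ) - 2*(N:ℝ)| ≤ A/2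

noncomputable instance : DecidablePred (Pprop A N) := fun n => by unfold Pprop; infer_instance

noncomputable def Bset : Finset ℤ := Finset.Icc (0:ℤ) (3*(N:ℤ))

lemma Pprop_mem (hA : 0 < A) (hAN : A ≤ (N:ℝ)) :
    ∀ n : ℤ, Pprop A N n → n ∈ Bset N := by
  intro n h
  rw [Bset, Finset.mem_Icc]
  have h3 : ((3*(N:ℤ) : ℤ):ℝ) = 3*(N:ℝ) := by push_cast; ring
  rcases h with h | h <;> rw [abs_le] at h
  · constructor
    · have : (0:ℝ) ≤ (n:ℝ) := by linarith
      exact_mod_cast this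
    · have : (n:ℝ) ≤ ((3*(N:ℤ) : ℤ):ℝ) := by rw [h3]; linarith
      exact_mod_cast this
  · constructor
    · have : (0:ℝ) ≤ (n:ℝ) := by linarith
      exact_mod_cast this
    · have : (n:ℝ) ≤ ((3*(N:ℤ) : ℤ):ℝ) := by rw [h3]; linarith
      exact_mod_cast this

lemma Pprop_not_zero (hA : 0 < A) (hAN : A ≤ (N:ℝ)) (hN1 : 1 ≤ (N:ℝ)) :
    ¬ Pprop A N 0 := by
  rintro (h | h) <;>
  · rw [Int.cast_zero, zero_sub, abs_neg, _root_.abs_of_nonneg (by positivity)] at h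
    linarith

-- the indicator-count S is at most 2A+6
lemma S_le (hA : 0 < A) :
    (∑ n ∈ Bset N, if Pprop A N n then (1:ℝ) else 0) ≤ 2*A+6 := by
  rw [Finset.sum_boole]
  set M : ℤ := ⌈A/2⌉ with hM
  have hM0 : 0 ≤ M := Int.ceil_nonneg (by positivity)
  have hMA : (M:ℝ) ≤ A/2 + 1 := le_of_lt (Int.ceil_lt_add_one _)
  have hAM : A/2 ≤ (M:ℝ) := Int.le_ceil _
  have hsub : (Bset N).filter (Pprop A N) ⊆
      Finset.Icc ((N:ℤ) - M) ((N:ℤ) + M) ∪ Finset.Icc (2*(N:ℤ) - M) (2*(N:ℤ) + M) := by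
    intro n hn
    rw [Finset.mem_filter] at hn
    rcases hn.2 with h | h <;> rw [abs_le] at h
    · refine Finset.mem_union_left _ (Finset.mem_Icc.mpr ⟨?_, ?_⟩)
      · have : ((N:ℤ):ℝ) - (M:ℝ) ≤ (n:ℝ) := by push_cast; linarith
        exact_mod_cast this
      · have : (n:ℝ) ≤ ((N:ℤ):ℝ) + (M:ℝ) := by push_cast; linarith
        exact_mod_cast this
    · refine Finset.mem_union_right _ (Finset.mem_Icc.mpr ⟨?_, ?_⟩)
      · have : ((2*(N:ℤ):ℤ):ℝ) - (M:ℝ) ≤ (n:ℝ) := by push_cast; linarith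
        exact_mod_cast this
      · have : (n:ℝ) ≤ ((2*(N:ℤ):ℤ):ℝ) + (M:ℝ) := by push_cast; linarith
        exact_mod_cast this
  have hcard : ((Bset N).filter (Pprop A N)).card
      ≤ (Finset.Icc ((N:ℤ) - M) ((N:ℤ) + M)).card
        + (Finset.Icc (2*(N:ℤ) - M) (2*(N:ℤ) + M)).card :=
    (Finset.card_le_card hsub).trans (Finset.card_union_le _ _)
  have hIccCard : ∀ a : ℤ, ((Finset.Icc (a - M) (a + M)).card : ℝ) = 2*(M:ℝ)+1 := by
    intro a
    rw [Int.card_Icc]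
    rw [show (a + M + 1 - (a - M)) = 2*M+1 by ring]
    have h2 : (((2*M+1).toNat : ℤ) : ℝ) = ((2*M+1 : ℤ) : ℝ) := by
      rw [Int.toNat_of_nonneg (by omega)]
    push_cast at h2 ⊢
    linarith
  have hstep2 : (((Bset N).filter (Pprop A N)).card : ℝ)
      ≤ (2*(M:ℝ)+1) + (2*(M:ℝ)+1) := by
    calc (((Bset N).filter (Pprop A N)).card : ℝ)
        ≤ ((Finset.Icc ((N:ℤ) - M) ((N:ℤ) + M)).card : ℝ)
          + ((Finset.Icc (2*(N:ℤ) - M) (2*(N:ℤ) + M)).card : ℝ) := by exact_mod_cast hcard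
      _ = (2*(M:ℝ)+1) + (2*(M:ℝ)+1) := by rw [hIccCard, hIccCard]
  linarith

-- the triple-count q bounds
lemma q_ge (hA : 0 < A) (hAN : A ≤ (N:ℝ)) (hN1 : 1 ≤ (N:ℝ)) :
    (A/4)^2 ≤ ∑ a ∈ Bset N, ∑ b ∈ Bset N, ∑ c ∈ Bset N,
      (if Pprop A N a ∧ Pprop A N b ∧ Pprop A N c ∧ a + b = c then (1:ℝ) else 0) ∧
    (1:ℝ) ≤ ∑ a ∈ Bset N, ∑ b ∈ Bset N, ∑ c ∈ Bset N,
      (if Pprop A N a ∧ Pprop A N b ∧ Pprop A N c ∧ a + b = c then (1:ℝ) else 0) := by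
  set K : ℤ := ⌊A/4⌋ with hK
  have hK0 : 0 ≤ K := Int.floor_nonneg.mpr (by positivity)
  have hK0' : (0:ℝ) ≤ (K:ℝ) := by exact_mod_cast hK0
  have hKA : (K:ℝ) ≤ A/4 := Int.floor_le _
  have hKA' : A/4 - 1 < (K:ℝ) := Int.sub_one_lt_floor _
  set J : Finset ℤ := Finset.Icc ((N:ℤ) - K) ((N:ℤ) + K) with hJ
  have hKN : (K:ℝ) ≤ (N:ℝ) := by linarith
  have hKNz : K ≤ (N:ℤ) := by exact_mod_cast hKN
  have hK2N : 2*(K:ℝ) ≤ (N:ℝ) := by linarith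
  have hK2Nz : 2*K ≤ (N:ℤ) := by exact_mod_cast hK2N
  have hJB : J ⊆ Bset N := by
    intro n hn
    rw [hJ, Finset.mem_Icc] at hn
    rw [Bset, Finset.mem_Icc]
    omega
  have hPa : ∀ a ∈ J, Pprop A N a := by
    intro a ha
    rw [hJ, Finset.mem_Icc] at ha
    left
    rw [abs_le]
    have h1 : ((N:ℤ):ℝ) - (K:ℝ) ≤ (a:ℝ) := by exact_mod_cast ha.1
    have h2 : (a:ℝ) ≤ ((N:ℤ):ℝ) + (K:ℝ) := by exact_mod_cast ha.2
    push_cast at h1 h2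
    constructor <;> linarith
  have hPab : ∀ a ∈ J, ∀ b ∈ J, Pprop A N (a+b) := by
    intro a ha b hb
    rw [hJ, Finset.mem_Icc] at ha hb
    right
    rw [abs_le]
    have h1 : ((N:ℤ):ℝ) - (K:ℝ) ≤ (a:ℝ) := by exact_mod_cast ha.1
    have h2 : (a:ℝ) ≤ ((N:ℤ):ℝ) + (K:ℝ) := by exact_mod_cast ha.2
    have h3 : ((N:ℤ):ℝ) - (K:ℝ) ≤ (b:ℝ) := by exact_mod_cast hb.1
    have h4 : (b:ℝ) ≤ ((N:ℤ):ℝ) + (K:ℝ) := by exact_mod_cast hb.2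
    push_cast at h1 h2 h3 h4 ⊢
    constructor <;> linarith
  have habB : ∀ a ∈ J, ∀ b ∈ J, a + b ∈ Bset N := by
    intro a ha b hb
    rw [hJ, Finset.mem_Icc] at ha hb
    rw [Bset, Finset.mem_Icc]
    omega
  -- inner sum at least 1 for a b ∈ J
  have hinner : ∀ a ∈ J, ∀ b ∈ J, (1:ℝ) ≤ ∑ c ∈ Bset N,
      (if Pprop A N a ∧ Pprop A N b ∧ Pprop A N c ∧ a + b = c then (1:ℝ) else 0) := by
    intro a ha b hb
    have := Finset.single_le_sum (f := fun c => (if Pprop A N a ∧ Pprop A N b ∧ Pprop A N c ∧ a + b = c then (1:ℝ) else 0))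
      (fun c _ => by positivity) (habB a ha b hb)
    simp only at this
    rwa [if_pos ⟨hPa a ha, hPa b hb, hPab a ha b hb, trivial⟩] at this
  have hJcard : ((J.card : ℝ)) = 2*(K:ℝ)+1 := by
    rw [hJ, Int.card_Icc, show ((N:ℤ) + K + 1 - ((N:ℤ) - K)) = 2*K+1 by ring]
    have h2 : (((2*K+1).toNat : ℤ) : ℝ) = ((2*K+1 : ℤ) : ℝ) := by
      rw [Int.toNat_of_nonneg (by omega)]
    push_cast at h2 ⊢
    linarith
  have hstep : ((J.card : ℝ))^2 ≤ ∑ a ∈ Bset N, ∑ b ∈ Bset N, ∑ c ∈ Bset N,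
      (if Pprop A N a ∧ Pprop A N b ∧ Pprop A N c ∧ a + b = c then (1:ℝ) else 0) := by
    have h1 : ((J.card : ℝ))^2 = ∑ a ∈ J, ∑ b ∈ J, (1:ℝ) := by
      simp [pow_two]
    rw [h1]
    have h2 : ∀ a ∈ J, ∑ b ∈ J, (1:ℝ) ≤ ∑ b ∈ Bset N, ∑ c ∈ Bset N,
        (if Pprop A N a ∧ Pprop A N b ∧ Pprop A N c ∧ a + b = c then (1:ℝ) else 0) := by
      intro a ha
      refine le_trans (Finset.sum_le_sum fun b hb => hinner a ha b hb) ?_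
      refine Finset.sum_le_sum_of_subset_of_nonneg hJB fun b _ _ => ?_
      exact Finset.sum_nonneg fun c _ => by positivity
    refine le_trans (Finset.sum_le_sum h2) ?_
    refine Finset.sum_le_sum_of_subset_of_nonneg hJB fun a _ _ => ?_
    exact Finset.sum_nonneg fun b _ => Finset.sum_nonneg fun c _ => by positivity
  constructor
  · refine le_trans ?_ hstep
    rw [hJcard]
    have hA4 : 0 ≤ A/4 := by positivity
    have : A/4 ≤ 2*(K:ℝ)+1 := by
      rcases le_or_gt A 4 with h | h
      · linarith
      · linarith
    nlinarith
  · refine le_trans ?_ hstep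
    rw [hJcard]
    nlinarith

-- q ≤ S²
lemma q_le_sq :
    (∑ a ∈ Bset N, ∑ b ∈ Bset N, ∑ c ∈ Bset N,
      (if Pprop A N a ∧ Pprop A N b ∧ Pprop A N c ∧ a + b = c then (1:ℝ) else 0))
    ≤ (∑ n ∈ Bset N, if Pprop A N n then (1:ℝ) else 0)^2 := by
  have hinner : ∀ a b : ℤ, (∑ c ∈ Bset N,
      (if Pprop A N a ∧ Pprop A N b ∧ Pprop A N c ∧ a + b = c then (1:ℝ) else 0))
      ≤ (if Pprop A N a then (1:ℝ) else 0) * (if Pprop A N b then (1:ℝ) else 0) := by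
    intro a b
    have hpt : ∀ c ∈ Bset N, (if Pprop A N a ∧ Pprop A N b ∧ Pprop A N c ∧ a + b = c then (1:ℝ) else 0)
        ≤ (if c = a + b then (if Pprop A N a then (1:ℝ) else 0) * (if Pprop A N b then (1:ℝ) else 0) else 0) := by
      intro c _
      by_cases h : Pprop A N a ∧ Pprop A N b ∧ Pprop A N c ∧ a + b = c
      · rw [if_pos h, if_pos h.2.2.2.symm, if_pos h.1, if_pos h.2.1]
        norm_num
      · rw [if_neg h]
        split
        · positivity
        · exact le_rfl
    refine le_trans (Finset.sum_le_sum hpt) ?_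
    rw [Finset.sum_ite_eq' (Bset N) (a+b)]
    split
    · exact le_rfl
    · positivity
  calc (∑ a ∈ Bset N, ∑ b ∈ Bset N, ∑ c ∈ Bset N,
      (if Pprop A N a ∧ Pprop A N b ∧ Pprop A N c ∧ a + b = c then (1:ℝ) else 0))
      ≤ ∑ a ∈ Bset N, ∑ b ∈ Bset N,
        (if Pprop A N a then (1:ℝ) else 0) * (if Pprop A N b then (1:ℝ) else 0) := by
        refine Finset.sum_le_sum fun a _ => Finset.sum_le_sum fun b _ => hinner a b
    _ = (∑ n ∈ Bset N, if Pprop A N n then (1:ℝ) else 0)^2 := by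
        rw [pow_two, Finset.sum_mul_sum]

end pack

lemma phiPacket_eq (R A : ℝ) (N : ℕ) (hA : 0 < A) (hAN : A ≤ (N:ℝ)) (x : ℝ) :
    phiPacket R A (N:ℝ) x = phiB (Pprop A N) (Bset N) R x := by
  unfold phiPacket phiB
  congr 1
  have hsupp : ∀ n : ℤ, n ∉ Bset N →
      (if |(n:ℝ) - (N:ℝ)| ≤ A/2 ∨ |(n:ℝ) - 2*(N:ℝ)| ≤ A/2
        then Complex.exp (2 * (π : ℂ) * Complex.I * (n : ℂ) * (x : ℂ)) else 0) = 0 := by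
    intro n hn
    rw [if_neg]
    intro hP
    exact hn (Pprop_mem A N hA hAN n hP)
  rw [tsum_eq_sum hsupp]
  refine Finset.sum_congr rfl fun n _ => ?_
  unfold gfun
  exact if_congr Iff.rfl rfl rfl

lemma arith_sq_bound (Sv A : ℝ) (hS0 : 0 ≤ Sv) (hSle : Sv ≤ 2*A+6) :
    Sv^2 ≤ 8*A^2 + 72 := by
  nlinarith [sq_nonneg (A-3)]

lemma arith_S4 (Sv qv : ℝ) (hS0 : 0 ≤ Sv) (hq0 : 0 ≤ qv) (hS2 : Sv^2 ≤ 200*qv) :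
    Sv^4 ≤ 40000*qv^2 := by
  nlinarith [sq_nonneg Sv]

/-- High-to-low energy transfer for the dispersionless ODE for `s < −1/2`:
with `R = N^{−1/2−s}`, `A = N^{1−θ}` and `T_N = N^{2s−1−θ}`, the low frequency
part of `w(T_N)` has `H^s` norm at least `c N^{−1/2−s−3θ}`. -/
theorem ode_high_to_low_supercritical (s θ : ℝ) (hs : s < -(1/2)) (hθ : 0 < θ)
    (hsθ : s < -(1/2) - 3*θ) :
    ∃ c : ℝ, 0 < c ∧ ∃ N₀ : ℕ, ∀ N : ℕ, N₀ ≤ N →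
      ∀ R A T : ℝ,
        R = (N:ℝ) ^ (-(1/2) - s) → A = (N:ℝ) ^ (1 - θ) → T = (N:ℝ) ^ (2*s - 1 - θ) →
        c * (N:ℝ) ^ (-(1/2) - s - 3*θ) ≤
          Real.sqrt (∑' n : ℤ,
            if |n| < (N : ℤ) then
              ((1:ℝ) + (n:ℝ)^2) ^ s *
                ‖fourierCoeff1 (fun x => odeSol (phiPacket R A (N:ℝ)) x T) n‖^2
            else 0) := by
  obtain ⟨N₀, hN₀⟩ := exists_nat_gt (max ((1280000:ℝ) ^ (3*θ)⁻¹) 11520000)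
  refine ⟨1/64, by norm_num, N₀, ?_⟩
  intro N hNN R A T hR hA hT
  have hNr : (N₀:ℝ) ≤ (N:ℝ) := by exact_mod_cast hNN
  have hNbig : max ((1280000:ℝ) ^ (3*θ)⁻¹) 11520000 < (N:ℝ) := lt_of_lt_of_le hN₀ hNr
  have hN2 : (11520000:ℝ) ≤ (N:ℝ) := le_of_lt (lt_of_le_of_lt (le_max_right _ _) hNbig)
  have hN1 : (1:ℝ) ≤ (N:ℝ) := by linarith
  have hNpos : (0:ℝ) < (N:ℝ) := by linarith
  -- positivity of the parameters
  have hRpos : 0 < R := by rw [hR]; exact Real.rpow_pos_of_pos hNpos _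
  have hApos : 0 < A := by rw [hA]; exact Real.rpow_pos_of_pos hNpos _
  have hTpos : 0 < T := by rw [hT]; exact Real.rpow_pos_of_pos hNpos _
  have hAN : A ≤ (N:ℝ) := by
    rw [hA]
    calc (N:ℝ)^(1-θ) ≤ (N:ℝ)^(1:ℝ) := Real.rpow_le_rpow_of_exponent_le hN1 (by linarith)
      _ = (N:ℝ) := Real.rpow_one _
  -- rpow algebra
  have hmul : ∀ a b : ℝ, (N:ℝ)^a * (N:ℝ)^b = (N:ℝ)^(a+b) :=
    fun a b => (Real.rpow_add hNpos a b).symm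
  have hsq : ∀ a : ℝ, ((N:ℝ)^a)^2 = (N:ℝ)^(a+a) := fun a => by rw [pow_two, hmul]
  have hcb : ∀ a : ℝ, ((N:ℝ)^a)^3 = (N:ℝ)^(a+a+a) := fun a => by
    rw [pow_succ, hsq, hmul]
  have hTRA2 : T * R^2 * A^2 = (N:ℝ)^(-(3*θ)) := by
    rw [hT, hR, hA, hsq, hsq, hmul, hmul]
    congr 1; ring
  have hTR2 : T * R^2 = (N:ℝ)^(-(2+θ)) := by
    rw [hT, hR, hsq, hmul]; congr 1; ring
  have hTRA3 : T * R^3 * A^2 = (N:ℝ)^(-(1/2) - s - 3*θ) := by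
    rw [hT, hR, hA, hcb, hsq, hmul, hmul]
    congr 1; ring
  -- smallness of the key quantities
  have h3θ : (0:ℝ) < 3*θ := by linarith
  have hE1 : (N:ℝ)^(-(3*θ)) ≤ 1/1280000 := by
    have hb : (1280000:ℝ)^(3*θ)⁻¹ ≤ (N:ℝ) :=
      le_of_lt (lt_of_le_of_lt (le_max_left _ _) hNbig)
    have hpow : (1280000:ℝ) ≤ (N:ℝ)^(3*θ) := by
      calc (1280000:ℝ) = ((1280000:ℝ)^(3*θ)⁻¹)^(3*θ) := by
            rw [← Real.rpow_mul (by norm_num), inv_mul_cancel₀ (ne_of_gt h3θ), Real.rpow_one]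
        _ ≤ (N:ℝ)^(3*θ) :=
            Real.rpow_le_rpow (Real.rpow_nonneg (by norm_num) _) hb (le_of_lt h3θ)
    rw [Real.rpow_neg (le_of_lt hNpos), one_div]
    exact inv_anti₀ (by norm_num) hpow
  have hE2 : (N:ℝ)^(-(2+θ)) ≤ 1/11520000 := by
    have hpow : (11520000:ℝ) ≤ (N:ℝ)^(2+θ) := by
      calc (11520000:ℝ) ≤ (N:ℝ) := hN2
        _ = (N:ℝ)^(1:ℝ) := (Real.rpow_one _).symm
        _ ≤ (N:ℝ)^(2+θ) := Real.rpow_le_rpow_of_exponent_le hN1 (by linarith)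
    rw [Real.rpow_neg (le_of_lt hNpos), one_div]
    exact inv_anti₀ (by norm_num) hpow
  -- setting up S and q
  obtain ⟨Sv, hSdef⟩ : ∃ Sv : ℝ, Sv = ∑ n ∈ Bset N, if Pprop A N n then (1:ℝ) else 0 :=
    ⟨_, rfl⟩
  obtain ⟨qv, hqdef⟩ : ∃ qv : ℝ, qv = ∑ a ∈ Bset N, ∑ b ∈ Bset N, ∑ c ∈ Bset N,
      (if Pprop A N a ∧ Pprop A N b ∧ Pprop A N c ∧ a + b = c then (1:ℝ) else 0) :=
    ⟨_, rfl⟩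
  have hS0 : 0 ≤ Sv := by
    rw [hSdef]; exact Finset.sum_nonneg fun n _ => by positivity
  have hSle : Sv ≤ 2*A+6 := by rw [hSdef]; exact S_le A N hApos
  obtain ⟨hqA0, hq10⟩ := q_ge A N hApos hAN hN1
  have hqA : (A/4)^2 ≤ qv := by rw [hqdef]; exact hqA0
  have hq1 : (1:ℝ) ≤ qv := by rw [hqdef]; exact hq10
  clear hqA0 hq10
  have hqS : qv ≤ Sv^2 := by rw [hqdef, hSdef]; exact q_le_sq A N
  have hq0 : (0:ℝ) ≤ qv := le_trans zero_le_one hq1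
  have hq16 : A^2 ≤ 16*qv := by
    have h : (A/4)^2 = A^2/16 := by ring
    rw [h] at hqA
    linarith
  -- combined smallness condition
  have hScond : T * R^2 * Sv^2 ≤ 8*(N:ℝ)^(-(3*θ)) + 72*(N:ℝ)^(-(2+θ)) := by
    calc T*R^2*Sv^2 ≤ T*R^2*(8*A^2+72) :=
          mul_le_mul_of_nonneg_left (arith_sq_bound Sv A hS0 hSle)
            (le_of_lt (mul_pos hTpos (pow_pos hRpos 2)))
      _ = 8*(T*R^2*A^2) + 72*(T*R^2) := by ring
      _ = 8*(N:ℝ)^(-(3*θ)) + 72*(N:ℝ)^(-(2+θ)) := by rw [hTRA2, hTR2]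
  have hEsm : 8*(N:ℝ)^(-(3*θ)) + 72*(N:ℝ)^(-(2+θ)) ≤ 1/80000 := by linarith
  have hsmall : T * (R*Sv)^2 ≤ 1 := by
    have h : T*(R*Sv)^2 = T*R^2*Sv^2 := by ring
    rw [h]
    linarith
  have hrem : T * R^2 * Sv^4 ≤ qv / 2 := by
    have hTR2pos : (0:ℝ) < T*R^2 := mul_pos hTpos (pow_pos hRpos 2)
    have hS2 : Sv^2 ≤ 200*qv := by
      have h1 := arith_sq_bound Sv A hS0 hSle
      linarith
    have hS4 : Sv^4 ≤ 40000*qv^2 := arith_S4 Sv qv hS0 hq0 hS2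
    have h4 : T*R^2*qv ≤ 1/80000 := by
      have h3 : T*R^2*qv ≤ T*R^2*Sv^2 :=
        mul_le_mul_of_nonneg_left hqS (le_of_lt hTR2pos)
      exact le_trans h3 (le_trans hScond hEsm)
    calc T*R^2*Sv^4 ≤ T*R^2*(40000*qv^2) :=
          mul_le_mul_of_nonneg_left hS4 (le_of_lt hTR2pos)
      _ = (40000*qv)*(T*R^2*qv) := by ring
      _ ≤ (40000*qv)*(1/80000) := by
          refine mul_le_mul_of_nonneg_left h4 (by positivity)
      _ = qv/2 := by ring
  -- the core lower bound
  have hP0 : ¬ Pprop A N 0 := Pprop_not_zero A N hApos hAN hN1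
  have hcore := core_lower (Pprop A N) (Bset N) R T Sv qv (le_of_lt hRpos) (le_of_lt hTpos)
      hP0 hSdef hqdef hsmall hrem
  -- identify the zeroth Fourier coefficient
  have hw0 : fourierCoeff1 (fun x => odeSol (phiPacket R A (N:ℝ)) x T) 0
      = ∫ x in (0:ℝ)..1, phiB (Pprop A N) (Bset N) R x
          * Complex.exp (Complex.I
            * ((‖phiB (Pprop A N) (Bset N) R x‖^2 : ℝ) : ℂ) * (T : ℂ)) := by
    unfold fourierCoeff1 odeSol
    refine intervalIntegral.integral_congr fun x _ => ?_
    beta_reduce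
    rw [phiPacket_eq R A N hApos hAN x]
    have hz : (-2*(π:ℂ)*Complex.I*(((0:ℤ)):ℂ)*(x:ℂ)) = 0 := by push_cast; ring
    rw [hz, Complex.exp_zero, mul_one]
  -- tsum manipulation
  obtain ⟨F, hF⟩ : ∃ F : ℤ → ℝ, F = fun n => if |n| < (N:ℤ) then
      ((1:ℝ) + (n:ℝ)^2) ^ s *
        ‖fourierCoeff1 (fun x => odeSol (phiPacket R A (N:ℝ)) x T) n‖^2 else 0 :=
    ⟨_, rfl⟩
  have hgoal : (∑' n : ℤ,
      if |n| < (N : ℤ) then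
        ((1:ℝ) + (n:ℝ)^2) ^ s *
          ‖fourierCoeff1 (fun x => odeSol (phiPacket R A (N:ℝ)) x T) n‖^2
      else 0) = ∑' n, F n := by rw [hF]
  rw [hgoal]
  have hFnn : ∀ n, 0 ≤ F n := by
    intro n
    rw [hF]
    dsimp only
    split
    · positivity
    · exact le_rfl
  have htsum : ∑' n, F n = ∑ n ∈ Finset.Icc (-(N:ℤ)) (N:ℤ), F n := by
    refine tsum_eq_sum fun n hn => ?_
    rw [hF]
    dsimp only
    rw [if_neg]
    intro habs
    rw [abs_lt] at habs
    exact hn (Finset.mem_Icc.mpr ⟨by omega, by omega⟩)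
  have h0mem : (0:ℤ) ∈ Finset.Icc (-(N:ℤ)) (N:ℤ) := Finset.mem_Icc.mpr ⟨by omega, by omega⟩
  have hsingle : F 0 ≤ ∑ n ∈ Finset.Icc (-(N:ℤ)) (N:ℤ), F n :=
    Finset.single_le_sum (fun n _ => hFnn n) h0mem
  have hN1z : (1:ℤ) ≤ (N:ℤ) := by exact_mod_cast hN1
  have hF0 : F 0 = ‖fourierCoeff1 (fun x => odeSol (phiPacket R A (N:ℝ)) x T) 0‖^2 := by
    rw [hF]
    dsimp only
    rw [if_pos (by rw [abs_zero]; omega)]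
    norm_num [Real.one_rpow]
  -- final chain
  have hnorm : (N:ℝ)^(-(1/2) - s - 3*θ)/32
      ≤ ‖fourierCoeff1 (fun x => odeSol (phiPacket R A (N:ℝ)) x T) 0‖ := by
    rw [hw0]
    refine le_trans ?_ hcore
    rw [← hTRA3]
    have hTR3 : (0:ℝ) < T*R^3 := by positivity
    have h : (T*R^3)*(A^2/16) ≤ (T*R^3)*qv :=
      mul_le_mul_of_nonneg_left (by linarith) (le_of_lt hTR3)
    linarith
  have hx0 : (0:ℝ) ≤ (N:ℝ)^(-(1/2) - s - 3*θ) := Real.rpow_nonneg (le_of_lt hNpos) _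
  calc (1/64) * (N:ℝ)^(-(1/2) - s - 3*θ)
      ≤ (N:ℝ)^(-(1/2) - s - 3*θ)/32 := by linarith
    _ ≤ ‖fourierCoeff1 (fun x => odeSol (phiPacket R A (N:ℝ)) x T) 0‖ := hnorm
    _ = Real.sqrt (F 0) := by rw [hF0, Real.sqrt_sq (norm_nonneg _)]
    _ ≤ Real.sqrt (∑' n, F n) := Real.sqrt_le_sqrt (by rw [htsum]; exact hsingle)
end

section
/- Let s < 0. There exists c > 0 such that for every real A ≥ 2, every integer N ≥ 10A, every R > 0, and every t ≥ 0 the following holds. Let φ(x) = R Σ_{n∈S} e^{2πinx} where S = {n ∈ ℤ : |n − N| ≤ A/2 or |n − 2N| ≤ A/2}, and let Ξ_1(t) = it |φ|² φ. Then (Σ_{n∈ℤ, |n|<N} (1+n²)^s |\widehat{Ξ_1(t)}(n)|²)^{1/2} ≥ c t R³ A² · f(A), where f(A) = 1 if s < −1/2, f(A) = (log A)^{1/2} if s = −1/2, and f(A) = A^{1/2+s} if −1/2 < s < 0. -/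
open scoped Real
open Finset

noncomputable def Efun (n : ℤ) (x : ℝ) : ℂ :=
  Complex.exp (2 * (π : ℂ) * Complex.I * (n : ℂ) * (x : ℂ))

open Classical in
noncomputable def Sfin (A : ℝ) (N : ℕ) : Finset ℤ :=
  (Finset.Icc (0:ℤ) (3*N)).filter
    (fun n => |(n:ℝ) - N| ≤ A/2 ∨ |(n:ℝ) - 2*N| ≤ A/2)

noncomputable def cnt (A : ℝ) (N : ℕ) (m : ℤ) : ℝ :=
  ∑ i ∈ Sfin A N, ∑ j ∈ Sfin A N, ∑ k ∈ Sfin A N, (if i - j + k = m then (1:ℝ) else 0)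

lemma cnt_nonneg (A : ℝ) (N : ℕ) (m : ℤ) : 0 ≤ cnt A N m := by
  refine Finset.sum_nonneg fun i _ => Finset.sum_nonneg fun j _ =>
    Finset.sum_nonneg fun k _ => ?_
  positivity

lemma mem_Sfin {A : ℝ} {N : ℕ} (hA : 2 ≤ A) (hN : 10 * A ≤ (N:ℝ)) (n : ℤ) :
    n ∈ Sfin A N ↔ (|(n:ℝ) - N| ≤ A/2 ∨ |(n:ℝ) - 2*N| ≤ A/2) := by
  classical
  rw [Sfin, Finset.mem_filter, Finset.mem_Icc]
  constructor
  · rintro ⟨-, h⟩; exact h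
  · intro h
    refine ⟨⟨?_, ?_⟩, h⟩
    · have : (0:ℝ) ≤ (n:ℝ) := by
        rcases h with h | h <;> rcases abs_le.1 h with ⟨h1, h2⟩ <;> nlinarith
      exact_mod_cast this
    · have : (n:ℝ) ≤ 3 * (N:ℕ) := by
        rcases h with h | h <;> rcases abs_le.1 h with ⟨h1, h2⟩ <;> nlinarith
      exact_mod_cast this

lemma phi_eq {A : ℝ} {N : ℕ} (hA : 2 ≤ A) (hN : 10 * A ≤ (N:ℝ)) (R x : ℝ) :
    phiPacket R A (N:ℝ) x = (R:ℂ) * ∑ n ∈ Sfin A N, Efun n x := by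
  rw [phiPacket]
  congr 1
  rw [tsum_eq_sum (s := Sfin A N)
    (by intro n hn
        rw [if_neg]
        exact fun h => hn ((mem_Sfin hA hN n).2 h))]
  exact Finset.sum_congr rfl fun n hn => if_pos ((mem_Sfin hA hN n).1 hn)

lemma conj_phi {A : ℝ} {N : ℕ} (hA : 2 ≤ A) (hN : 10 * A ≤ (N:ℝ)) (R x : ℝ) :
    (starRingEnd ℂ) (phiPacket R A (N:ℝ) x) = (R:ℂ) * ∑ n ∈ Sfin A N, Efun (-n) x := by
  rw [phi_eq hA hN, map_mul, Complex.conj_ofReal, map_sum]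
  congr 1
  refine Finset.sum_congr rfl fun n hn => ?_
  rw [Efun, Efun, ← Complex.exp_conj]
  congr 1
  simp [Complex.ext_iff]

lemma integral_exp_int (k : ℤ) :
    (∫ x : ℝ in (0:ℝ)..1, Complex.exp ((2 * (π:ℂ) * Complex.I * (k:ℂ)) * (x:ℂ))) =
      if k = 0 then 1 else 0 := by
  rcases eq_or_ne k 0 with hk | hk
  · simp [hk]
  · have hc : (2 * (π:ℂ) * Complex.I * (k:ℂ)) ≠ 0 := by
      simp [Complex.ext_iff, Real.pi_ne_zero, Complex.I_ne_zero, hk]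
    rw [integral_exp_mul_complex hc]
    have h1 : Complex.exp (2 * (π:ℂ) * Complex.I * (k:ℂ) * 1) = 1 := by
      rw [mul_one]
      have := Complex.exp_int_mul_two_pi_mul_I k
      rw [← this]; ring_nf
    rw [if_neg hk]
    push_cast
    rw [h1]
    simp

lemma coeff_eq {A : ℝ} {N : ℕ} (hA : 2 ≤ A) (hN : 10 * A ≤ (N:ℝ)) (R t : ℝ) (m : ℤ) :
    fourierCoeff1 (fun x =>
        Complex.I * (t : ℂ) * ((‖phiPacket R A (N:ℝ) x‖^2 : ℝ) : ℂ) *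
          phiPacket R A (N:ℝ) x) m
      = Complex.I * (t:ℂ) * (R:ℂ)^3 *
          ∑ i ∈ Sfin A N, ∑ j ∈ Sfin A N, ∑ k ∈ Sfin A N,
            (if i - j + k = m then (1:ℂ) else 0) := by
  set S := Sfin A N with hS
  have key : ∀ x : ℝ,
      (Complex.I * (t : ℂ) * ((‖phiPacket R A (N:ℝ) x‖^2 : ℝ) : ℂ) *
          phiPacket R A (N:ℝ) x) * Complex.exp (-2 * (π:ℂ) * Complex.I * (m:ℂ) * (x:ℂ))
        = ∑ i ∈ S, ∑ j ∈ S, ∑ k ∈ S,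
            (Complex.I * (t:ℂ) * (R:ℂ)^3 *
              Complex.exp ((2 * (π:ℂ) * Complex.I * ((i - j + k - m : ℤ) : ℂ)) * (x:ℂ))) := by
    intro x
    have hns : ((‖phiPacket R A (N:ℝ) x‖^2 : ℝ) : ℂ)
        = phiPacket R A (N:ℝ) x * (starRingEnd ℂ) (phiPacket R A (N:ℝ) x) := by
      rw [Complex.mul_conj]; norm_cast
      rw [Complex.normSq_eq_norm_sq]
    rw [hns, conj_phi hA hN, phi_eq hA hN]
    have expand : ∀ (a b c : ℤ → ℂ) (e : ℂ),
        ((∑ i ∈ S, a i) * (∑ j ∈ S, b j) * (∑ k ∈ S, c k)) * e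
          = ∑ i ∈ S, ∑ j ∈ S, ∑ k ∈ S, a i * b j * c k * e := by
      intro a b c e
      rw [Finset.sum_mul_sum, Finset.sum_mul, Finset.sum_mul]
      refine Finset.sum_congr rfl fun i _ => ?_
      rw [Finset.sum_mul_sum, Finset.sum_mul]
      refine Finset.sum_congr rfl fun j _ => ?_
      rw [Finset.sum_mul]
    have hterm : ∀ i j k : ℤ,
        Efun i x * Efun (-j) x * Efun k x *
            Complex.exp (-2 * (π:ℂ) * Complex.I * (m:ℂ) * (x:ℂ))
          = Complex.exp ((2 * (π:ℂ) * Complex.I * ((i - j + k - m : ℤ) : ℂ)) * (x:ℂ)) := by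
      intro i j k
      rw [Efun, Efun, Efun, ← Complex.exp_add, ← Complex.exp_add, ← Complex.exp_add]
      congr 1
      push_cast
      ring
    calc Complex.I * (t:ℂ) *
          (((R:ℂ) * ∑ i ∈ S, Efun i x) * ((R:ℂ) * ∑ j ∈ S, Efun (-j) x)) *
          ((R:ℂ) * ∑ k ∈ S, Efun k x) *
          Complex.exp (-2 * (π:ℂ) * Complex.I * (m:ℂ) * (x:ℂ))
        = Complex.I * (t:ℂ) * (R:ℂ)^3 *
            (((∑ i ∈ S, Efun i x) * (∑ j ∈ S, Efun (-j) x) * (∑ k ∈ S, Efun k x)) *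
              Complex.exp (-2 * (π:ℂ) * Complex.I * (m:ℂ) * (x:ℂ))) := by ring
      _ = _ := by
        rw [expand]
        simp only [Finset.mul_sum]
        exact Finset.sum_congr rfl fun i _ => Finset.sum_congr rfl fun j _ =>
          Finset.sum_congr rfl fun k _ => by rw [hterm]
  rw [fourierCoeff1]
  rw [intervalIntegral.integral_congr (g := fun x => ∑ i ∈ S, ∑ j ∈ S, ∑ k ∈ S,
      (Complex.I * (t:ℂ) * (R:ℂ)^3 *
        Complex.exp ((2 * (π:ℂ) * Complex.I * ((i - j + k - m : ℤ) : ℂ)) * (x:ℂ))))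
    (fun x _ => key x)]
  rw [intervalIntegral.integral_finset_sum (fun i _ => by
    refine Continuous.intervalIntegrable ?_ _ _
    refine continuous_finset_sum _ fun j _ => continuous_finset_sum _ fun k _ => ?_
    fun_prop)]
  rw [Finset.mul_sum]
  refine Finset.sum_congr rfl fun i _ => ?_
  rw [intervalIntegral.integral_finset_sum (fun j _ => by
    refine Continuous.intervalIntegrable ?_ _ _
    refine continuous_finset_sum _ fun k _ => ?_
    fun_prop)]
  rw [Finset.mul_sum]
  refine Finset.sum_congr rfl fun j _ => ?_
  rw [intervalIntegral.integral_finset_sum (fun k _ => by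
    refine Continuous.intervalIntegrable ?_ _ _
    fun_prop)]
  rw [Finset.mul_sum]
  refine Finset.sum_congr rfl fun k _ => ?_
  rw [intervalIntegral.integral_const_mul, integral_exp_int]
  congr 1
  simp [sub_eq_zero]

lemma norm_coeff {A : ℝ} {N : ℕ} (hA : 2 ≤ A) (hN : 10 * A ≤ (N:ℝ))
    {R t : ℝ} (hR : 0 ≤ R) (ht : 0 ≤ t) (m : ℤ) :
    ‖fourierCoeff1 (fun x =>
        Complex.I * (t : ℂ) * ((‖phiPacket R A (N:ℝ) x‖^2 : ℝ) : ℂ) *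
          phiPacket R A (N:ℝ) x) m‖ = t * R^3 * cnt A N m := by
  rw [coeff_eq hA hN]
  have h1 : (∑ i ∈ Sfin A N, ∑ j ∈ Sfin A N, ∑ k ∈ Sfin A N,
      (if i - j + k = m then (1:ℂ) else 0)) = ((cnt A N m : ℝ) : ℂ) := by
    rw [cnt]
    push_cast
    exact Finset.sum_congr rfl fun i _ => Finset.sum_congr rfl fun j _ =>
      Finset.sum_congr rfl fun k _ => by split <;> simp
  rw [h1, norm_mul, norm_mul, norm_mul, Complex.norm_I, one_mul,
    Complex.norm_real, Complex.norm_real, norm_pow, Complex.norm_real]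
  rw [Real.norm_eq_abs, Real.norm_eq_abs, Real.norm_eq_abs,
    abs_of_nonneg ht, abs_of_nonneg hR, abs_of_nonneg (cnt_nonneg A N m)]

lemma cnt_lower {A : ℝ} {N : ℕ} (hA : 2 ≤ A) (hN : 10 * A ≤ (N:ℝ)) {m : ℤ}
    (hm : |m| ≤ (⌊A/8⌋₊ : ℤ)) :
    ((⌊A/8⌋₊ + 1 : ℕ) : ℝ)^2 ≤ cnt A N m := by
  classical
  set B : ℕ := ⌊A/8⌋₊ with hB
  have hBA : (B:ℝ) ≤ A/8 := Nat.floor_le (by positivity)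
  have hmR : |(m:ℝ)| ≤ (B:ℝ) := by exact_mod_cast (by exact_mod_cast hm : |(m:ℝ)| ≤ ((B:ℤ):ℝ))
  set S := Sfin A N with hS
  -- collapse inner sum over k
  have hinner : ∀ i j : ℤ,
      (∑ k ∈ S, (if i - j + k = m then (1:ℝ) else 0))
        = (if m - i + j ∈ S then (1:ℝ) else 0) := by
    intro i j
    rw [show (fun k => (if i - j + k = m then (1:ℝ) else 0))
        = fun k => (if k = m - i + j then (1:ℝ) else 0) by
      funext k; congr 1; simp only [eq_iff_iff]; omega]
    simp [Finset.sum_ite_eq']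
  have hcnt : cnt A N m = ∑ i ∈ S, ∑ j ∈ S, (if m - i + j ∈ S then (1:ℝ) else 0) := by
    rw [cnt]
    exact Finset.sum_congr rfl fun i _ => Finset.sum_congr rfl fun j _ => hinner i j
  set T1 : Finset ℤ := Finset.Icc (N:ℤ) ((N:ℤ) + B) with hT1
  set T2 : Finset ℤ := Finset.Icc (2*(N:ℤ)) (2*(N:ℤ) + B) with hT2
  have hT1S : T1 ⊆ S := by
    intro n hn
    rw [hT1, Finset.mem_Icc] at hn
    rw [hS, mem_Sfin hA hN]
    left
    have h1 : ((N:ℤ):ℝ) ≤ (n:ℝ) := by exact_mod_cast hn.1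
    have h2 : (n:ℝ) ≤ ((N:ℤ):ℝ) + (B:ℝ) := by exact_mod_cast hn.2
    push_cast at h1 h2 ⊢
    rw [abs_le]; constructor <;> nlinarith
  have hT2S : T2 ⊆ S := by
    intro n hn
    rw [hT2, Finset.mem_Icc] at hn
    rw [hS, mem_Sfin hA hN]
    right
    have h1 : (2*(N:ℤ):ℝ) ≤ (n:ℝ) := by exact_mod_cast hn.1
    have h2 : (n:ℝ) ≤ (2*(N:ℤ):ℝ) + (B:ℝ) := by exact_mod_cast hn.2
    push_cast at h1 h2 ⊢
    rw [abs_le]; constructor <;> nlinarith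
  have hmem : ∀ i ∈ T1, ∀ j ∈ T2, m - i + j ∈ S := by
    intro i hi j hj
    rw [hT1, Finset.mem_Icc] at hi
    rw [hT2, Finset.mem_Icc] at hj
    rw [hS, mem_Sfin hA hN]
    left
    have h1 : ((i:ℝ)) ≤ (N:ℝ) + B := by exact_mod_cast hi.2
    have h1' : ((N:ℝ)) ≤ (i:ℝ) := by exact_mod_cast hi.1
    have h2 : ((j:ℝ)) ≤ 2*(N:ℝ) + B := by exact_mod_cast hj.2
    have h2' : (2*(N:ℝ)) ≤ (j:ℝ) := by exact_mod_cast hj.1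
    have habs := abs_le.1 hmR
    have : ((m - i + j : ℤ) : ℝ) = (m:ℝ) - i + j := by push_cast; ring
    rw [this, abs_le]
    constructor <;> nlinarith [habs.1, habs.2]
  have step1 : ∑ i ∈ T1, ∑ j ∈ T2, (if m - i + j ∈ S then (1:ℝ) else 0) ≤ cnt A N m := by
    rw [hcnt]
    refine le_trans ?_ (Finset.sum_le_sum_of_subset_of_nonneg hT1S
      (fun i _ _ => Finset.sum_nonneg fun j _ => by positivity))
    refine Finset.sum_le_sum fun i hi => ?_
    exact Finset.sum_le_sum_of_subset_of_nonneg hT2S (fun j _ _ => by positivity)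
  refine le_trans (le_of_eq ?_) step1
  have : ∀ i ∈ T1, ∑ j ∈ T2, (if m - i + j ∈ S then (1:ℝ) else 0) = (B+1 : ℕ) := by
    intro i hi
    rw [Finset.sum_congr rfl (fun j hj => if_pos (hmem i hi j hj))]
    rw [Finset.sum_const]
    have : T2.card = B + 1 := by
      rw [hT2, Int.card_Icc]; omega
    rw [this]; simp
  rw [Finset.sum_congr rfl this, Finset.sum_const]
  have : T1.card = B + 1 := by
    rw [hT1, Int.card_Icc]; omega
  rw [this]
  push_cast
  ring

lemma harmonic_nat (n : ℕ) :
    Real.log ((n:ℝ)+1) ≤ ∑ k ∈ Finset.range n, 1/((k:ℝ)+1) := by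
  induction n with
  | zero => simp
  | succ n ih =>
      rw [Finset.sum_range_succ]
      have hpos : (0:ℝ) < (n:ℝ) + 1 := by positivity
      have hpos2 : (0:ℝ) < (n:ℝ) + 2 := by positivity
      have hlog : Real.log (((n:ℝ)+2)/((n:ℝ)+1)) ≤ ((n:ℝ)+2)/((n:ℝ)+1) - 1 :=
        Real.log_le_sub_one_of_pos (by positivity)
      rw [Real.log_div (ne_of_gt hpos2) (ne_of_gt hpos)] at hlog
      have heq : ((n:ℝ)+2)/((n:ℝ)+1) - 1 = 1/((n:ℝ)+1) := by field_simp; norm_num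
      rw [heq] at hlog
      have h2 : ((n+1:ℕ):ℝ) + 1 = (n:ℝ) + 2 := by push_cast; ring
      rw [h2]
      linarith

lemma harmonic_log (B : ℕ) :
    Real.log ((B:ℝ)+2) ≤ ∑ m ∈ Finset.Icc (0:ℤ) (B:ℤ), 1/((m:ℝ)+1) := by
  have hre : ∑ m ∈ Finset.Icc (0:ℤ) (B:ℤ), 1/((m:ℝ)+1)
      = ∑ k ∈ Finset.range (B+1), 1/((k:ℝ)+1) := by
    refine Finset.sum_nbij' (i := fun m => m.toNat) (j := fun k => (k:ℤ))
      ?_ ?_ ?_ ?_ ?_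
    · intro a ha; simp only [Finset.mem_Icc] at ha; simp only [Finset.mem_range]; omega
    · intro a ha; simp only [Finset.mem_range] at ha; simp only [Finset.mem_Icc]; omega
    · intro a ha; simp only [Finset.mem_Icc] at ha; omega
    · intro a _; omega
    · intro a ha; simp only [Finset.mem_Icc] at ha
      congr 2
      rw [show ((a.toNat:ℕ):ℝ) = ((a.toNat:ℤ):ℝ) by push_cast; ring,
        Int.toNat_of_nonneg ha.1]
  rw [hre]
  have := harmonic_nat (B+1)
  push_cast at this
  rw [show ((B:ℝ)+1+1) = (B:ℝ)+2 by ring] at this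
  exact this

lemma W_ge_one (s : ℝ) (B : ℕ) :
    (1:ℝ) ≤ ∑ m ∈ Finset.Icc (-(B:ℤ)) (B:ℤ), (1+(m:ℝ)^2)^s := by
  have h0 : (0:ℤ) ∈ Finset.Icc (-(B:ℤ)) (B:ℤ) := by simp
  have := Finset.single_le_sum (f := fun m : ℤ => (1+(m:ℝ)^2)^s)
    (fun i _ => Real.rpow_nonneg (by positivity) s) h0
  simpa using this

-- case s = -1/2
lemma W_half (B : ℕ) :
    Real.log ((B:ℝ)+2) ≤ ∑ m ∈ Finset.Icc (-(B:ℤ)) (B:ℤ), (1+(m:ℝ)^2)^(-(1/2):ℝ) := by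
  have hsub : Finset.Icc (0:ℤ) (B:ℤ) ⊆ Finset.Icc (-(B:ℤ)) (B:ℤ) := by
    intro m hm; rw [Finset.mem_Icc] at *; omega
  refine le_trans ?_ (Finset.sum_le_sum_of_subset_of_nonneg hsub
    (fun m _ _ => Real.rpow_nonneg (by positivity) _))
  refine le_trans (harmonic_log B) (Finset.sum_le_sum fun m hm => ?_)
  rw [Finset.mem_Icc] at hm
  have hm0 : (0:ℝ) ≤ (m:ℝ) := by exact_mod_cast hm.1
  have h1 : (1+(m:ℝ)^2)^(-(1/2):ℝ) = 1/Real.sqrt (1+(m:ℝ)^2) := by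
    rw [Real.rpow_neg (by positivity), Real.sqrt_eq_rpow]
    rw [eq_comm, one_div]
  rw [h1]
  have hsq : Real.sqrt (1+(m:ℝ)^2) ≤ (m:ℝ)+1 := by
    rw [show ((m:ℝ)+1) = Real.sqrt (((m:ℝ)+1)^2) by rw [Real.sqrt_sq (by positivity)]]
    exact Real.sqrt_le_sqrt (by nlinarith)
  exact one_div_le_one_div_of_le (by positivity) hsq

-- case -1/2 < s < 0
lemma W_sub (s : ℝ) (hs1 : -(1/2) < s) (hs0 : s < 0) (B : ℕ) (hB : 1 ≤ B) :
    (1/2) * ((B:ℝ))^(1+2*s) ≤ ∑ m ∈ Finset.Icc (-(B:ℤ)) (B:ℤ), (1+(m:ℝ)^2)^s := by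
  have hBpos : (0:ℝ) < (B:ℝ) := by exact_mod_cast hB
  have hsub : Finset.Icc (1:ℤ) (B:ℤ) ⊆ Finset.Icc (-(B:ℤ)) (B:ℤ) := by
    intro m hm; rw [Finset.mem_Icc] at *; omega
  refine le_trans ?_ (Finset.sum_le_sum_of_subset_of_nonneg hsub
    (fun m _ _ => Real.rpow_nonneg (by positivity) _))
  have hterm : ∀ m ∈ Finset.Icc (1:ℤ) (B:ℤ),
      (1/2) * ((B:ℝ))^(2*s) ≤ (1+(m:ℝ)^2)^s := by
    intro m hm
    rw [Finset.mem_Icc] at hm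
    have hm1 : (1:ℝ) ≤ (m:ℝ) := by exact_mod_cast hm.1
    have hmB : (m:ℝ) ≤ (B:ℝ) := by exact_mod_cast hm.2
    have h1 : (1+(m:ℝ)^2) ≤ 2*(B:ℝ)^2 := by nlinarith
    have h2 : (2*(B:ℝ)^2)^s ≤ (1+(m:ℝ)^2)^s :=
      Real.rpow_le_rpow_of_nonpos (by positivity) h1 (le_of_lt hs0)
    refine le_trans ?_ h2
    rw [Real.mul_rpow (by norm_num) (by positivity)]
    have h3 : (1/2:ℝ) ≤ (2:ℝ)^s := by
      have := Real.rpow_le_rpow_of_exponent_le (x := 2) (by norm_num)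
        (show (-1:ℝ) ≤ s by linarith)
      rw [show ((2:ℝ)^(-1:ℝ)) = 1/2 by
        rw [Real.rpow_neg_one]; norm_num] at this
      exact this
    have h4 : ((B:ℝ)^2)^s = (B:ℝ)^(2*s) := by
      rw [← Real.rpow_natCast (B:ℝ) 2, ← Real.rpow_mul (le_of_lt hBpos)]
      norm_num
    rw [h4]
    have h5 : (0:ℝ) ≤ (B:ℝ)^(2*s) := Real.rpow_nonneg (le_of_lt hBpos) _
    nlinarith
  refine le_trans ?_ (Finset.sum_le_sum hterm)
  rw [Finset.sum_const, Int.card_Icc]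
  have hcard : ((B:ℤ) + 1 - 1).toNat = B := by omega
  rw [hcard]
  have : (B:ℝ)^(1+2*s) = (B:ℝ) * (B:ℝ)^(2*s) := by
    rw [Real.rpow_add hBpos, Real.rpow_one]
  rw [this]
  simp only [nsmul_eq_mul]
  ring_nf
  rfl

set_option maxHeartbeats 1000000 in
/-- Lower bound on the low frequency part of `Ξ_1(t) = it|φ|²φ`, the `k = 1`
term of the power series expansion of the solution of the dispersionless ODE:
a high-to-low energy transfer, for `s < 0`. -/
theorem Xi_one_lower_bound (s : ℝ) (hs : s < 0) :
    ∃ c : ℝ, 0 < c ∧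
      ∀ (A : ℝ) (N : ℕ) (R t : ℝ),
        2 ≤ A → 10 * A ≤ (N:ℝ) → 0 < R → 0 ≤ t →
        c * t * R^3 * A^2 *
            (if s < -(1/2) then 1
             else if s = -(1/2) then (Real.log A) ^ ((1:ℝ)/2)
             else A ^ (1/2 + s))
          ≤ Real.sqrt (∑' n : ℤ,
              if |n| < (N : ℤ) then
                ((1:ℝ) + (n:ℝ)^2) ^ s *
                  ‖fourierCoeff1 (fun x =>
                    Complex.I * (t : ℂ) * ((‖phiPacket R A (N:ℝ) x‖^2 : ℝ) : ℂ) *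
                      phiPacket R A (N:ℝ) x) n‖^2
              else 0) := by
  refine ⟨1/1024, by norm_num, ?_⟩
  intro A N R t hA hN hR ht
  set B : ℕ := ⌊A/8⌋₊ with hBdef
  have hA0 : (0:ℝ) < A := by linarith
  have hBA : (B:ℝ) ≤ A/8 := Nat.floor_le (by positivity)
  have hAB : A/8 < (B:ℝ) + 1 := Nat.lt_floor_add_one _
  have hBN : (B:ℤ) < (N:ℤ) := by
    have : (B:ℝ) < (N:ℝ) := by nlinarith
    exact_mod_cast this
  set W : ℝ := ∑ m ∈ Finset.Icc (-(B:ℤ)) (B:ℤ), ((1:ℝ)+(m:ℝ)^2)^s with hW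
  have hWnonneg : 0 ≤ W :=
    Finset.sum_nonneg fun m _ => Real.rpow_nonneg (by positivity) s
  set K : ℝ := t * R^3 * ((B:ℝ)+1)^2 with hK
  have hK0 : 0 ≤ K := by positivity
  -- the summand of the tsum
  set g : ℤ → ℝ := fun n =>
    if |n| < (N : ℤ) then
      ((1:ℝ) + (n:ℝ)^2) ^ s *
        ‖fourierCoeff1 (fun x =>
          Complex.I * (t : ℂ) * ((‖phiPacket R A (N:ℝ) x‖^2 : ℝ) : ℂ) *
            phiPacket R A (N:ℝ) x) n‖^2
    else 0 with hg
  have hg0 : ∀ n : ℤ, 0 ≤ g n := by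
    intro n; rw [hg]; dsimp only
    split
    · positivity
    · exact le_rfl
  have hsummable : Summable g := by
    refine summable_of_ne_finset_zero (s := Finset.Icc (-(N:ℤ)) (N:ℤ)) ?_
    intro n hn
    rw [hg]; dsimp only
    refine if_neg fun h => hn ?_
    rw [abs_lt] at h
    rw [Finset.mem_Icc]
    omega
  have hsum_le : ∑ m ∈ Finset.Icc (-(B:ℤ)) (B:ℤ), g m ≤ ∑' n, g n :=
    Summable.sum_le_tsum _ (fun i _ => hg0 i) hsummable
  have hterm : ∀ m ∈ Finset.Icc (-(B:ℤ)) (B:ℤ),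
      ((1:ℝ)+(m:ℝ)^2)^s * K^2 ≤ g m := by
    intro m hm
    rw [Finset.mem_Icc] at hm
    have habs : |m| ≤ (B:ℤ) := abs_le.mpr ⟨hm.1, hm.2⟩
    rw [hg]; dsimp only
    rw [if_pos (lt_of_le_of_lt habs hBN)]
    rw [norm_coeff hA hN hR.le ht]
    have hcntl := cnt_lower hA hN habs
    have hcast : ((⌊A/8⌋₊ + 1 : ℕ) : ℝ) = (B:ℝ) + 1 := by rw [← hBdef]; push_cast; ring
    rw [hcast] at hcntl
    have h1 : K ≤ t * R^3 * cnt A N m := by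
      rw [hK]
      have := mul_le_mul_of_nonneg_left hcntl (by positivity : (0:ℝ) ≤ t * R^3)
      linarith
    have h2 : K^2 ≤ (t * R^3 * cnt A N m)^2 := pow_le_pow_left₀ hK0 h1 2
    exact mul_le_mul_of_nonneg_left h2 (Real.rpow_nonneg (by positivity) s)
  have hlow : K^2 * W ≤ ∑' n, g n := by
    refine le_trans ?_ hsum_le
    rw [hW, Finset.mul_sum]
    refine le_trans (le_of_eq ?_) (Finset.sum_le_sum hterm)
    exact Finset.sum_congr rfl fun m _ => by ring
  have hsqrt : K * Real.sqrt W ≤ Real.sqrt (∑' n, g n) := by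
    have : K * Real.sqrt W = Real.sqrt (K^2 * W) := by
      rw [Real.sqrt_mul (sq_nonneg K), Real.sqrt_sq hK0]
    rw [this]
    exact Real.sqrt_le_sqrt hlow
  -- main claim: the weight factor is at most 16 √W
  have claim : (if s < -(1/2) then (1:ℝ)
      else if s = -(1/2) then (Real.log A) ^ ((1:ℝ)/2)
      else A ^ (1/2 + s)) ≤ 16 * Real.sqrt W := by
    have hsqrtW0 : 0 ≤ Real.sqrt W := Real.sqrt_nonneg W
    by_cases h1 : s < -(1/2)
    · rw [if_pos h1]
      have := Real.sqrt_le_sqrt (W_ge_one s B)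
      rw [Real.sqrt_one] at this
      rw [← hW] at this
      linarith
    · rw [if_neg h1]
      by_cases h2 : s = -(1/2)
      · rw [if_pos h2]
        subst h2
        have hlogA : 0 ≤ Real.log A := Real.log_nonneg (by linarith)
        have hlogB : (1/6) * Real.log A ≤ Real.log ((B:ℝ)+2) := by
          rcases le_or_gt A 64 with h64 | h64
          · have l1 : Real.log A ≤ Real.log 64 := Real.log_le_log hA0 h64
            have l2 : Real.log 64 = 6 * Real.log 2 := by
              rw [show (64:ℝ) = 2^(6:ℕ) by norm_num, Real.log_pow]
              push_cast; ring
            have l3 : Real.log 2 ≤ Real.log ((B:ℝ)+2) :=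
              Real.log_le_log (by norm_num) (by linarith [Nat.cast_nonneg (α:=ℝ) B])
            linarith
          · have hsA : Real.sqrt A ≤ (B:ℝ)+2 := by
              have h8 : Real.sqrt A ≤ A/8 := by
                rw [show A/8 = Real.sqrt ((A/8)^2) from (Real.sqrt_sq (by positivity)).symm]
                apply Real.sqrt_le_sqrt; nlinarith
              linarith
            have := Real.log_le_log (Real.sqrt_pos.mpr hA0) hsA
            rw [Real.log_sqrt hA0.le] at this
            linarith
        have hWhalf : Real.log ((B:ℝ)+2) ≤ W := by rw [hW]; exact W_half B
        have hWlog : (1/6) * Real.log A ≤ W := le_trans hlogB hWhalf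
        have m1 : Real.sqrt ((1/6) * Real.log A) ≤ Real.sqrt W := Real.sqrt_le_sqrt hWlog
        have m2 : Real.sqrt ((1/6) * Real.log A)
            = Real.sqrt (1/6) * Real.sqrt (Real.log A) := Real.sqrt_mul (by norm_num) _
        have m3 : (1/4:ℝ) ≤ Real.sqrt (1/6) := by
          rw [show (1/4:ℝ) = Real.sqrt ((1/4)^2) from (Real.sqrt_sq (by norm_num)).symm]
          apply Real.sqrt_le_sqrt; norm_num
        rw [← Real.sqrt_eq_rpow]
        nlinarith [Real.sqrt_nonneg (Real.log A)]
      · rw [if_neg h2]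
        have hs1 : -(1/2) < s := lt_of_le_of_ne (not_lt.mp h1) (Ne.symm h2)
        have hθ0 : (0:ℝ) < 1+2*s := by linarith
        have hθ1 : 1+2*s ≤ 1 := by linarith
        have hArpow0 : (0:ℝ) ≤ A^(1+2*s) := Real.rpow_nonneg hA0.le _
        have hWlow : (1/256) * A^(1+2*s) ≤ W := by
          rcases lt_or_ge A 16 with h16 | h16
          · have hle : A^(1+2*s) ≤ A := by
              have := Real.rpow_le_rpow_of_exponent_le (by linarith : (1:ℝ) ≤ A) hθ1
              rwa [Real.rpow_one] at this
            have hW1 : (1:ℝ) ≤ W := by rw [hW]; exact W_ge_one s B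
            nlinarith
          · have hB1 : 1 ≤ B := by
              rw [hBdef]
              exact Nat.le_floor (by push_cast; linarith)
            have hABlow : A/16 ≤ (B:ℝ) := by linarith
            have hWsub : (1/2) * ((B:ℝ))^(1+2*s) ≤ W := by rw [hW]; exact W_sub s hs1 hs B hB1
            have c1 : (A/16)^(1+2*s) ≤ (B:ℝ)^(1+2*s) :=
              Real.rpow_le_rpow (by positivity) hABlow hθ0.le
            have c2 : (A/16)^(1+2*s) = A^(1+2*s)/(16:ℝ)^(1+2*s) :=
              Real.div_rpow hA0.le (by norm_num) _
            have c3 : (16:ℝ)^(1+2*s) ≤ 16 := by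
              have := Real.rpow_le_rpow_of_exponent_le (by norm_num : (1:ℝ) ≤ 16) hθ1
              rwa [Real.rpow_one] at this
            have c4 : (0:ℝ) < (16:ℝ)^(1+2*s) := Real.rpow_pos_of_pos (by norm_num) _
            have c5 : A^(1+2*s)/16 ≤ A^(1+2*s)/(16:ℝ)^(1+2*s) := by
              rw [div_le_div_iff₀ (by norm_num) c4]
              nlinarith
            nlinarith
        have d1 : Real.sqrt ((1/256) * A^(1+2*s)) ≤ Real.sqrt W := Real.sqrt_le_sqrt hWlow
        have d2 : Real.sqrt ((1/256) * A^(1+2*s))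
            = (1/16) * Real.sqrt (A^(1+2*s)) := by
          rw [show (1/256:ℝ) = (1/16)^2 by norm_num, Real.sqrt_mul (by positivity),
            Real.sqrt_sq (by norm_num)]
        have d3 : Real.sqrt (A^(1+2*s)) = A^(1/2+s) := by
          rw [Real.sqrt_eq_rpow, ← Real.rpow_mul hA0.le]
          rw [show (1+2*s)*(1/2) = 1/2+s by ring]
        rw [← d3]
        linarith
  have hclaim0 : 0 ≤ (if s < -(1/2) then (1:ℝ)
      else if s = -(1/2) then (Real.log A) ^ ((1:ℝ)/2)
      else A ^ (1/2 + s)) := by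
    split
    · norm_num
    · split
      · exact Real.rpow_nonneg (Real.log_nonneg (by linarith)) _
      · exact Real.rpow_nonneg hA0.le _
  have final : 1/1024 * t * R^3 * A^2 *
      (if s < -(1/2) then (1:ℝ)
       else if s = -(1/2) then (Real.log A) ^ ((1:ℝ)/2)
       else A ^ (1/2 + s)) ≤ K * Real.sqrt W := by
    set Fv := (if s < -(1/2) then (1:ℝ)
       else if s = -(1/2) then (Real.log A) ^ ((1:ℝ)/2)
       else A ^ (1/2 + s)) with hFv
    have e1 : (A/8)^2 ≤ ((B:ℝ)+1)^2 := pow_le_pow_left₀ (by positivity) (le_of_lt hAB) 2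
    have e2 : Fv/16 ≤ Real.sqrt W := by linarith
    calc 1/1024 * t * R^3 * A^2 * Fv = (t*R^3) * ((A/8)^2 * (Fv/16)) := by ring
      _ ≤ (t*R^3) * (((B:ℝ)+1)^2 * Real.sqrt W) := by
          refine mul_le_mul_of_nonneg_left ?_ (by positivity)
          exact mul_le_mul e1 e2 (by positivity) (by positivity)
      _ = K * Real.sqrt W := by rw [hK]; ring
  calc 1/1024 * t * R^3 * A^2 *
      (if s < -(1/2) then (1:ℝ)
       else if s = -(1/2) then (Real.log A) ^ ((1:ℝ)/2)
       else A ^ (1/2 + s)) ≤ K * Real.sqrt W := final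
    _ ≤ Real.sqrt (∑' n, g n) := hsqrt
end

section
/- There exist universal constants c > 0 and C > 0 such that the following holds. Let φ̂ : ℤ → ℂ satisfy M := Σ_{n∈ℤ} |φ̂(n)| < ∞, let 0 < T ≤ c M^{−2}, and let a : ℤ → [0,T] → ℂ be such that t ↦ Σ_n |a_n(t)| is finite and continuous on [0,T] and a satisfies the Duhamel system with data φ̂, i.e. a_n(t) = φ̂(n) + i ∫₀^t Σ_{(n₁,n₂,n₃)∈Γ(n)} e^{−iΦ(n̄)t'} a_{n₁}(t') \overline{a_{n₂}(t')} a_{n₃}(t') dt' for all n ∈ ℤ and t ∈ [0,T]. Then sup_{t∈[0,T]} Σ_{n∈ℤ} |a_n(t)| ≤ C M and sup_{t∈[0,T]} sup_{n∈ℤ} |a_n(t)| ≤ C sup_{n∈ℤ} |φ̂(n)|. -/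
open scoped Real

open MeasureTheory Set

section DuhamelAux

private lemma summable_triple {f : ℤ → ℝ} (hf : Summable f) (h0 : ∀ n, 0 ≤ f n) :
    Summable (fun p : ℤ × ℤ × ℤ => f p.1 * (f p.2.1 * f p.2.2)) := by
  have h2 : Summable (fun q : ℤ × ℤ => f q.1 * f q.2) :=
    hf.mul_of_nonneg hf (fun n => h0 n) (fun n => h0 n)
  exact hf.mul_of_nonneg h2 (fun n => h0 n) (fun q => mul_nonneg (h0 _) (h0 _))

private lemma tsum_triple {f : ℤ → ℝ} (hf : Summable f) (h0 : ∀ n, 0 ≤ f n) :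
    ∑' p : ℤ × ℤ × ℤ, f p.1 * (f p.2.1 * f p.2.2) = (∑' n, f n) ^ 3 := by
  have h2 : Summable (fun q : ℤ × ℤ => f q.1 * f q.2) :=
    hf.mul_of_nonneg hf (fun n => h0 n) (fun n => h0 n)
  have h3 := summable_triple hf h0
  have e2 : ((∑' n, f n) * ∑' q : ℤ × ℤ, f q.1 * f q.2)
      = ∑' p : ℤ × ℤ × ℤ, f p.1 * (f p.2.1 * f p.2.2) := Summable.tsum_mul_tsum hf h2 h3
  have e1 : ((∑' n, f n) * ∑' n, f n) = ∑' q : ℤ × ℤ, f q.1 * f q.2 :=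
    Summable.tsum_mul_tsum hf hf h2
  rw [← e2, ← e1]; ring

private lemma sum_fiber_le {g : ℤ × ℤ × ℤ → ℝ} (hg : Summable g) (h0 : ∀ p, 0 ≤ g p)
    (Fs : Finset ℤ) :
    ∑ n ∈ Fs, ∑' p : {p : ℤ × ℤ × ℤ // n = p.1 - p.2.1 + p.2.2}, g p.1 ≤ ∑' p, g p := by
  classical
  have h1 : ∀ n : ℤ, (∑' p : {p : ℤ × ℤ × ℤ // n = p.1 - p.2.1 + p.2.2}, g p.1)
      = ∑' p, Set.indicator {p : ℤ × ℤ × ℤ | n = p.1 - p.2.1 + p.2.2} g p := fun n =>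
    tsum_subtype _ g
  rw [Finset.sum_congr rfl (fun n _ => h1 n), ← Summable.tsum_finsetSum (fun n _ => hg.indicator _)]
  refine Summable.tsum_le_tsum ?_ (summable_sum (fun n _ => hg.indicator _)) hg
  intro p
  have h2 : ∀ n ∈ Fs, Set.indicator {p : ℤ × ℤ × ℤ | n = p.1 - p.2.1 + p.2.2} g p
      = if n = p.1 - p.2.1 + p.2.2 then g p else 0 := fun n _ => by
    simp [Set.indicator_apply, Set.mem_setOf_eq]
  rw [Finset.sum_congr rfl h2, Finset.sum_ite_eq' Fs (p.1 - p.2.1 + p.2.2) (fun _ => g p)]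
  split_ifs
  · exact le_rfl
  · exact h0 p

end DuhamelAux

set_option maxHeartbeats 3000000 in
/-- A priori `FL¹` and `FL^∞` bounds for solutions of the Duhamel system of
the interaction representation of the cubic NLS on the circle, on the time
scale `T ≲ M^{−2}` where `M = Σ_n |φ̂(n)|`. -/
theorem duhamel_a_priori_bounds :
    ∃ c C : ℝ, 0 < c ∧ 0 < C ∧
      ∀ (φhat : ℤ → ℂ), Summable (fun n : ℤ => ‖φhat n‖) →
      ∀ T : ℝ, 0 < T → T ≤ c / (∑' n : ℤ, ‖φhat n‖)^2 →
      ∀ a : ℤ → ℝ → ℂ,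
        (∀ t ∈ Set.Icc (0:ℝ) T, Summable (fun n : ℤ => ‖a n t‖)) →
        ContinuousOn (fun t : ℝ => ∑' n : ℤ, ‖a n t‖) (Set.Icc (0:ℝ) T) →
        (∀ (n : ℤ), ∀ t ∈ Set.Icc (0:ℝ) T,
          a n t = φhat n + Complex.I *
            ∫ t' in (0:ℝ)..t,
              ∑' p : {p : ℤ × ℤ × ℤ // n = p.1 - p.2.1 + p.2.2},
                Complex.exp (-Complex.I *
                    ((n^2 - p.1.1^2 + p.1.2.1^2 - p.1.2.2^2 : ℤ) : ℂ) * (t' : ℂ)) *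
                  a p.1.1 t' * (starRingEnd ℂ) (a p.1.2.1 t') * a p.1.2.2 t') →
        (∀ t ∈ Set.Icc (0:ℝ) T,
          (∑' n : ℤ, ‖a n t‖) ≤ C * ∑' n : ℤ, ‖φhat n‖) ∧
        (∀ t ∈ Set.Icc (0:ℝ) T, ∀ n : ℤ,
          ‖a n t‖ ≤ C * ⨆ m : ℤ, ‖φhat m‖) := by
  classical
  refine ⟨1/16, 2, by norm_num, by norm_num, ?_⟩
  intro φhat hφ T hT0 hTle a hsum hcont heq
  set M : ℝ := ∑' n : ℤ, ‖φhat n‖ with hMdef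
  have hM0 : 0 ≤ M := tsum_nonneg (fun n => norm_nonneg _)
  have hMpos : 0 < M := by
    rcases hM0.lt_or_eq with h | h
    · exact h
    · exfalso
      rw [← h] at hTle
      norm_num at hTle
      linarith
  have hTM : T * M ^ 2 ≤ 1/16 :=
    (le_div_iff₀ (by positivity : (0:ℝ) < M ^ 2)).mp hTle
  have hT0' : (0:ℝ) ≤ T := hT0.le
  set S : ℝ → ℝ := fun t => ∑' n : ℤ, ‖a n t‖ with hSdef
  have hS0nonneg : ∀ t, 0 ≤ S t := fun t => tsum_nonneg (fun n => norm_nonneg _)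
  -- abbreviations
  set Fn : ℤ → ℝ → ℂ := fun n t' =>
    ∑' p : {p : ℤ × ℤ × ℤ // n = p.1 - p.2.1 + p.2.2},
      Complex.exp (-Complex.I *
          ((n^2 - p.1.1^2 + p.1.2.1^2 - p.1.2.2^2 : ℤ) : ℂ) * (t' : ℂ)) *
        a p.1.1 t' * (starRingEnd ℂ) (a p.1.2.1 t') * a p.1.2.2 t' with hFndef
  have heq' : ∀ (n : ℤ), ∀ t ∈ Set.Icc (0:ℝ) T,
      a n t = φhat n + Complex.I * ∫ t' in (0:ℝ)..t, Fn n t' := heq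
  set g3 : ℝ → ℤ × ℤ × ℤ → ℝ := fun t' p =>
    ‖a p.1 t'‖ * (‖a p.2.1 t'‖ * ‖a p.2.2 t'‖) with hg3def
  have hg3nonneg : ∀ t' p, 0 ≤ g3 t' p := fun t' p => by positivity
  have hg3sum : ∀ t' ∈ Set.Icc (0:ℝ) T, Summable (g3 t') := fun t' ht' =>
    summable_triple (hsum t' ht') (fun n => norm_nonneg _)
  have hg3tsum : ∀ t' ∈ Set.Icc (0:ℝ) T, ∑' p, g3 t' p = (S t') ^ 3 := fun t' ht' =>
    tsum_triple (hsum t' ht') (fun n => norm_nonneg _)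
  -- norm of each term of the nonlinearity
  have hterm : ∀ (n : ℤ) (t' : ℝ) (p : {p : ℤ × ℤ × ℤ // n = p.1 - p.2.1 + p.2.2}),
      ‖Complex.exp (-Complex.I *
            ((n^2 - p.1.1^2 + p.1.2.1^2 - p.1.2.2^2 : ℤ) : ℂ) * (t' : ℂ)) *
          a p.1.1 t' * (starRingEnd ℂ) (a p.1.2.1 t') * a p.1.2.2 t'‖ = g3 t' p.1 := by
    intro n t' p
    have hexp : ‖Complex.exp (-Complex.I *
        ((n^2 - p.1.1^2 + p.1.2.1^2 - p.1.2.2^2 : ℤ) : ℂ) * (t' : ℂ))‖ = 1 := by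
      have h1 : -Complex.I *
          ((n^2 - p.1.1^2 + p.1.2.1^2 - p.1.2.2^2 : ℤ) : ℂ) * (t' : ℂ)
          = Complex.I * ((-(((n^2 - p.1.1^2 + p.1.2.1^2 - p.1.2.2^2 : ℤ) : ℝ) * t') : ℝ) : ℂ) := by
        push_cast; ring
      rw [h1, Complex.norm_exp, Complex.mul_re, Complex.I_re,
        Complex.I_im, Complex.ofReal_re, Complex.ofReal_im]
      norm_num
    rw [norm_mul, norm_mul, norm_mul, hexp, one_mul, RCLike.norm_conj]
    simp only [hg3def]
    ring
  have hGsub : ∀ (n : ℤ), ∀ t' ∈ Set.Icc (0:ℝ) T,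
      Summable (fun p : {p : ℤ × ℤ × ℤ // n = p.1 - p.2.1 + p.2.2} => g3 t' p.1) :=
    fun n t' ht' => (hg3sum t' ht').subtype _
  have hFG : ∀ (n : ℤ), ∀ t' ∈ Set.Icc (0:ℝ) T,
      ‖Fn n t'‖ ≤ ∑' p : {p : ℤ × ℤ × ℤ // n = p.1 - p.2.1 + p.2.2}, g3 t' p.1 := by
    intro n t' ht'
    calc ‖Fn n t'‖
        ≤ ∑' p : {p : ℤ × ℤ × ℤ // n = p.1 - p.2.1 + p.2.2},
            ‖Complex.exp (-Complex.I *
                ((n^2 - p.1.1^2 + p.1.2.1^2 - p.1.2.2^2 : ℤ) : ℂ) * (t' : ℂ)) *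
              a p.1.1 t' * (starRingEnd ℂ) (a p.1.2.1 t') * a p.1.2.2 t'‖ :=
          norm_tsum_le_tsum_norm
            ((summable_congr (fun p => (hterm n t' p))).mpr (hGsub n t' ht'))
      _ = ∑' p : {p : ℤ × ℤ × ℤ // n = p.1 - p.2.1 + p.2.2}, g3 t' p.1 :=
          tsum_congr (hterm n t')
  -- the basic pointwise inequality from the Duhamel formula
  have hbase : ∀ (n : ℤ), ∀ t ∈ Set.Icc (0:ℝ) T,
      ‖a n t‖ ≤ ‖φhat n‖ + ‖∫ t' in (0:ℝ)..t, Fn n t'‖ := by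
    intro n t ht
    rw [heq' n t ht]
    refine (norm_add_le _ _).trans ?_
    rw [norm_mul, Complex.norm_I, one_mul]
  -- S t ≤ M + ∫_0^t S^3
  have hstep : ∀ t ∈ Set.Icc (0:ℝ) T, S t ≤ M + ∫ t' in (0:ℝ)..t, (S t') ^ 3 := by
    intro t ht
    have hIccsub : Set.Icc (0:ℝ) t ⊆ Set.Icc (0:ℝ) T :=
      Set.Icc_subset_Icc le_rfl ht.2
    have hS3int : IntervalIntegrable (fun t' => (S t') ^ 3) volume 0 t := by
      have hc : ContinuousOn (fun t' => (S t') ^ 3) (Set.uIcc (0:ℝ) t) := by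
        rw [Set.uIcc_of_le ht.1]
        exact (hcont.mono hIccsub).pow 3
      exact hc.intervalIntegrable
    refine Summable.tsum_le_of_sum_le (hsum t ht) ?_
    intro Fs
    have hQ : ∑ n ∈ Fs, ‖∫ t' in (0:ℝ)..t, Fn n t'‖ ≤ ∫ t' in (0:ℝ)..t, (S t') ^ 3 := by
      set Fs' := Fs.filter (fun n => IntervalIntegrable (Fn n) volume 0 t) with hFs'
      have hsub : Fs' ⊆ Fs := Finset.filter_subset _ _
      have hzero : ∀ n ∈ Fs, n ∉ Fs' → ‖∫ t' in (0:ℝ)..t, Fn n t'‖ = 0 := by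
        intro n hn hn'
        have hni : ¬ IntervalIntegrable (Fn n) volume 0 t := by
          simpa [hFs', hn] using hn'
        rw [intervalIntegral.integral_undef hni, norm_zero]
      rw [← Finset.sum_subset hsub hzero]
      have hint : ∀ n ∈ Fs', IntervalIntegrable (Fn n) volume 0 t := fun n hn =>
        (Finset.mem_filter.mp hn).2
      have hintnorm : ∀ n ∈ Fs', IntervalIntegrable (fun t' => ‖Fn n t'‖) volume 0 t :=
        fun n hn => (hint n hn).norm
      calc ∑ n ∈ Fs', ‖∫ t' in (0:ℝ)..t, Fn n t'‖
          ≤ ∑ n ∈ Fs', ∫ t' in (0:ℝ)..t, ‖Fn n t'‖ :=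
            Finset.sum_le_sum (fun n _ =>
              intervalIntegral.norm_integral_le_integral_norm ht.1)
        _ = ∫ t' in (0:ℝ)..t, ∑ n ∈ Fs', ‖Fn n t'‖ :=
            (intervalIntegral.integral_finset_sum hintnorm).symm
        _ ≤ ∫ t' in (0:ℝ)..t, (S t') ^ 3 := by
            have hsumint : IntervalIntegrable (fun t' => ∑ n ∈ Fs', ‖Fn n t'‖)
                volume 0 t := by
              have h5 := IntervalIntegrable.sum (μ := volume) (a := (0:ℝ)) (b := t) Fs'
                (f := fun n t' => ‖Fn n t'‖) hintnorm
              have h6 : (∑ n ∈ Fs', fun t' => ‖Fn n t'‖)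
                  = fun t' => ∑ n ∈ Fs', ‖Fn n t'‖ := by
                funext x; simp
              rwa [h6] at h5
            refine intervalIntegral.integral_mono_on ht.1 hsumint hS3int ?_
            intro x hx
            have hxT : x ∈ Set.Icc (0:ℝ) T := hIccsub hx
            calc ∑ n ∈ Fs', ‖Fn n x‖
                ≤ ∑ n ∈ Fs',
                    ∑' p : {p : ℤ × ℤ × ℤ // n = p.1 - p.2.1 + p.2.2}, g3 x p.1 :=
                  Finset.sum_le_sum (fun n _ => hFG n x hxT)
              _ ≤ ∑' p, g3 x p :=
                  sum_fiber_le (hg3sum x hxT) (hg3nonneg x) Fs'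
              _ = (S x) ^ 3 := hg3tsum x hxT
    calc ∑ n ∈ Fs, ‖a n t‖
        ≤ ∑ n ∈ Fs, (‖φhat n‖ + ‖∫ t' in (0:ℝ)..t, Fn n t'‖) :=
          Finset.sum_le_sum (fun n _ => hbase n t ht)
      _ = ∑ n ∈ Fs, ‖φhat n‖ + ∑ n ∈ Fs, ‖∫ t' in (0:ℝ)..t, Fn n t'‖ :=
          Finset.sum_add_distrib
      _ ≤ M + ∫ t' in (0:ℝ)..t, (S t') ^ 3 :=
          add_le_add (Summable.sum_le_tsum Fs (fun _ _ => norm_nonneg _) hφ) hQ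
  -- value at time zero
  have h00 : (0:ℝ) ∈ Set.Icc (0:ℝ) T := ⟨le_rfl, hT0'⟩
  have hS0 : S 0 = M := by
    have h1 : ∀ n : ℤ, a n 0 = φhat n := fun n => by
      rw [heq' n 0 h00, intervalIntegral.integral_same, mul_zero, add_zero]
    exact tsum_congr (fun n => by rw [h1 n])
  -- bootstrap: S t ≤ 2M
  have hboot : ∀ t ∈ Set.Icc (0:ℝ) T, S t ≤ 2 * M := by
    by_contra hcon
    push_neg at hcon
    obtain ⟨t₀, ht₀, hgt⟩ := hcon
    set E : Set ℝ := {t | t ∈ Set.Icc (0:ℝ) T ∧ 2 * M ≤ S t} with hEdef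
    have hEne : E.Nonempty := ⟨t₀, ht₀, hgt.le⟩
    have hEbdd : BddBelow E := ⟨0, fun x hx => hx.1.1⟩
    have hEclosed : IsClosed E := by
      have hEeq : E = Set.Icc (0:ℝ) T ∩ S ⁻¹' Set.Ici (2 * M) := by
        ext x; simp [hEdef, Set.mem_setOf_eq, Set.mem_preimage, Set.mem_Ici]
      rw [hEeq]
      exact hcont.preimage_isClosed_of_isClosed isClosed_Icc isClosed_Ici
    have hu := hEclosed.csInf_mem hEne hEbdd
    set u := sInf E with hudef
    have huIcc : u ∈ Set.Icc (0:ℝ) T := hu.1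
    have huS : 2 * M ≤ S u := hu.2
    have hult : ∀ x ∈ Set.Ioo (0:ℝ) u, S x ≤ 2 * M := by
      intro x hx
      by_contra hxx
      push_neg at hxx
      have hxE : x ∈ E := ⟨⟨hx.1.le, hx.2.le.trans huIcc.2⟩, hxx.le⟩
      exact absurd (csInf_le hEbdd hxE) (not_le.mpr hx.2)
    have hint : (∫ t' in (0:ℝ)..u, (S t') ^ 3) ≤ (2 * M) ^ 3 * u := by
      have hne : ∀ᵐ x : ℝ, x ≠ u := by
        refine MeasureTheory.ae_iff.mpr ?_
        have hset : {x : ℝ | ¬ x ≠ u} = {u} := by ext x; simp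
        rw [hset]
        exact measure_singleton u
      have hb : ∀ᵐ x : ℝ, x ∈ Set.uIoc (0:ℝ) u → ‖(S x) ^ 3‖ ≤ (2 * M) ^ 3 := by
        filter_upwards [hne] with x hxu hx
        rw [Set.uIoc_of_le huIcc.1] at hx
        have hxo : x ∈ Set.Ioo (0:ℝ) u := ⟨hx.1, lt_of_le_of_ne hx.2 hxu⟩
        have hSle := hult x hxo
        have h0 : 0 ≤ S x := hS0nonneg x
        rw [Real.norm_eq_abs, abs_of_nonneg (by positivity)]
        exact pow_le_pow_left₀ h0 hSle 3
      have h2 := intervalIntegral.norm_integral_le_of_norm_le_const_ae hb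
      calc (∫ t' in (0:ℝ)..u, (S t') ^ 3)
          ≤ ‖∫ t' in (0:ℝ)..u, (S t') ^ 3‖ := le_abs_self _
        _ ≤ (2 * M) ^ 3 * |u - 0| := h2
        _ = (2 * M) ^ 3 * u := by rw [sub_zero, abs_of_nonneg huIcc.1]
    have h3 := hstep u huIcc
    have h8 : (2 * M) ^ 3 * u ≤ 8 * M ^ 3 * T := by
      have : (2 * M) ^ 3 = 8 * M ^ 3 := by ring
      rw [this]
      exact mul_le_mul_of_nonneg_left huIcc.2 (by positivity)
    have h9 : 8 * M ^ 3 * T ≤ M / 2 := by nlinarith [hTM, hMpos]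
    linarith
  -- FL^1 conclusion and FL^∞ setup
  have hbddA : ∀ t ∈ Set.Icc (0:ℝ) T, ∀ n : ℤ, ‖a n t‖ ≤ 2 * M := fun t ht n =>
    (Summable.le_tsum (hsum t ht) n (fun _ _ => norm_nonneg _)).trans (hboot t ht)
  haveI : Nonempty (Set.Icc (0:ℝ) T) := (Set.nonempty_Icc.mpr hT0').to_subtype
  have hQbdd : BddAbove (Set.range fun q : (Set.Icc (0:ℝ) T) × ℤ => ‖a q.2 q.1‖) := by
    refine ⟨2 * M, ?_⟩
    rintro x ⟨q, rfl⟩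
    exact hbddA q.1 q.1.2 q.2
  set Q : ℝ := ⨆ q : (Set.Icc (0:ℝ) T) × ℤ, ‖a q.2 q.1‖ with hQdef
  have hleQ : ∀ t (ht : t ∈ Set.Icc (0:ℝ) T), ∀ n : ℤ, ‖a n t‖ ≤ Q := fun t ht n =>
    le_ciSup hQbdd (⟨⟨t, ht⟩, n⟩ : (Set.Icc (0:ℝ) T) × ℤ)
  have hQ0 : 0 ≤ Q := (norm_nonneg (a 0 0)).trans (hleQ 0 h00 0)
  have hΦbdd : BddAbove (Set.range fun m : ℤ => ‖φhat m‖) := by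
    refine ⟨M, ?_⟩
    rintro x ⟨m, rfl⟩
    exact Summable.le_tsum hφ m (fun _ _ => norm_nonneg _)
  have hΦ0 : 0 ≤ ⨆ m : ℤ, ‖φhat m‖ :=
    (norm_nonneg (φhat 0)).trans (le_ciSup hΦbdd 0)
  -- G_n ≤ Q * S^2
  have hGQ : ∀ (n : ℤ), ∀ t' ∈ Set.Icc (0:ℝ) T,
      (∑' p : {p : ℤ × ℤ × ℤ // n = p.1 - p.2.1 + p.2.2}, g3 t' p.1)
        ≤ Q * (S t') ^ 2 := by
    intro n t' ht'
    have hf := hsum t' ht'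
    have h2 : Summable (fun q : ℤ × ℤ => ‖a q.1 t'‖ * ‖a q.2 t'‖) :=
      hf.mul_of_nonneg hf (fun m => norm_nonneg _) (fun m => norm_nonneg _)
    have hinj : Function.Injective
        (fun p : {p : ℤ × ℤ × ℤ // n = p.1 - p.2.1 + p.2.2} => (p.1.2.1, p.1.2.2)) := by
      rintro ⟨⟨a1, a2, a3⟩, ha⟩ ⟨⟨b1, b2, b3⟩, hb⟩ h
      simp only [Prod.mk.injEq] at h
      refine Subtype.ext ?_
      simp only at ha hb ⊢
      obtain ⟨h1, h2'⟩ := h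
      subst h1; subst h2'
      have : a1 = b1 := by omega
      simp [this]
    have hsub2 : Summable
        (fun p : {p : ℤ × ℤ × ℤ // n = p.1 - p.2.1 + p.2.2} =>
          ‖a p.1.2.1 t'‖ * ‖a p.1.2.2 t'‖) :=
      h2.comp_injective hinj
    calc (∑' p : {p : ℤ × ℤ × ℤ // n = p.1 - p.2.1 + p.2.2}, g3 t' p.1)
        ≤ ∑' p : {p : ℤ × ℤ × ℤ // n = p.1 - p.2.1 + p.2.2},
            Q * (‖a p.1.2.1 t'‖ * ‖a p.1.2.2 t'‖) := by
          refine Summable.tsum_le_tsum (fun p => ?_) (hGsub n t' ht') (hsub2.mul_left Q)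
          exact mul_le_mul_of_nonneg_right (hleQ t' ht' _) (by positivity)
      _ = Q * ∑' p : {p : ℤ × ℤ × ℤ // n = p.1 - p.2.1 + p.2.2},
            (‖a p.1.2.1 t'‖ * ‖a p.1.2.2 t'‖) := tsum_mul_left
      _ ≤ Q * ∑' q : ℤ × ℤ, ‖a q.1 t'‖ * ‖a q.2 t'‖ := by
          refine mul_le_mul_of_nonneg_left ?_ hQ0
          exact Summable.tsum_le_tsum_of_inj _ hinj (fun c _ => by positivity)
            (fun p => le_rfl) hsub2 h2
      _ = Q * (S t') ^ 2 := by
          rw [← Summable.tsum_mul_tsum hf hf h2]; ring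
  -- FL^∞ bootstrap
  have hQle : Q ≤ (⨆ m : ℤ, ‖φhat m‖) + Q / 4 := by
    refine ciSup_le ?_
    rintro ⟨⟨t, ht⟩, n⟩
    have h1 : ‖a n t‖ ≤ ‖φhat n‖ + ‖∫ t' in (0:ℝ)..t, Fn n t'‖ := hbase n t ht
    have h2 : ‖∫ t' in (0:ℝ)..t, Fn n t'‖ ≤ Q * (2 * M) ^ 2 * t := by
      have hb : ∀ x ∈ Set.uIoc (0:ℝ) t, ‖Fn n x‖ ≤ Q * (2 * M) ^ 2 := by
        intro x hx
        rw [Set.uIoc_of_le ht.1] at hx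
        have hxT : x ∈ Set.Icc (0:ℝ) T := ⟨hx.1.le, hx.2.trans ht.2⟩
        calc ‖Fn n x‖
            ≤ ∑' p : {p : ℤ × ℤ × ℤ // n = p.1 - p.2.1 + p.2.2}, g3 x p.1 :=
              hFG n x hxT
          _ ≤ Q * (S x) ^ 2 := hGQ n x hxT
          _ ≤ Q * (2 * M) ^ 2 := by
              refine mul_le_mul_of_nonneg_left ?_ hQ0
              exact pow_le_pow_left₀ (hS0nonneg x) (hboot x hxT) 2
      have := intervalIntegral.norm_integral_le_of_norm_le_const hb
      calc ‖∫ t' in (0:ℝ)..t, Fn n t'‖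
          ≤ Q * (2 * M) ^ 2 * |t - 0| := this
        _ = Q * (2 * M) ^ 2 * t := by rw [sub_zero, abs_of_nonneg ht.1]
    have h3 : Q * (2 * M) ^ 2 * t ≤ Q / 4 := by
      have ht2 : t * M ^ 2 ≤ 1 / 16 := by
        refine le_trans ?_ hTM
        have := mul_le_mul_of_nonneg_right ht.2 (sq_nonneg M)
        linarith
      have h5 := mul_le_mul_of_nonneg_left ht2 (by positivity : (0:ℝ) ≤ 4 * Q)
      nlinarith [h5]
    have h4 : ‖φhat n‖ ≤ ⨆ m : ℤ, ‖φhat m‖ := le_ciSup hΦbdd n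
    linarith
  constructor
  · intro t ht
    have := hboot t ht
    linarith
  · intro t ht n
    have h1 := hleQ t ht n
    have h2 : Q ≤ 2 * ⨆ m : ℤ, ‖φhat m‖ := by linarith
    linarith
end
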